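/- arXiv:1709.05580 — 9 statements merged into one kernel-verified Lean document; each statement's English description precedes it below -/
import Mathlib

section
/- Let I be a compact metric space and Y a complete metric space. Let 𝒮 be the set of compact subsets K ⊆ I × Y with π(K) = I (equivalently, upper semi-continuous maps from I to the nonempty compact subsets of Y), equipped with the uniform distance d_𝒮(K, K') := sup_{x∈I} d_H(K(x), K'(x)), where K(x) := {y ∈ Y : (x, y) ∈ K}. Then the metric space (𝒮, d_𝒮) is complete. -/
/-- The fiber of `K ⊆ I × Y` over `x ∈ I`. -/
def fiber {I Y : Type*} (K : Set (I × Y)) (x : I) : Set Y := {y : Y | (x, y) ∈ K}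

/-- The uniform distance `d_𝒮(K, K') = sup_{x ∈ I} d_H(K(x), K'(x))` between two
compact subsets of `I × Y` projecting onto `I`. -/
noncomputable def dS {I Y : Type*} [MetricSpace I] [MetricSpace Y]
    (K K' : Set (I × Y)) : ℝ :=
  ⨆ x : I, Metric.hausdorffDist (fiber K x) (fiber K' x)

open Metric EMetric TopologicalSpace Filter Set

lemma fiber_compact {I Y : Type*} [TopologicalSpace I] [TopologicalSpace Y] [T2Space I]
    {K : Set (I × Y)} (hK : IsCompact K) (x : I) : IsCompact (fiber K x) := by
  have : fiber K x = Prod.snd '' (K ∩ Prod.fst ⁻¹' {x}) := by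
    ext y
    constructor
    · intro hy; exact ⟨(x, y), ⟨hy, rfl⟩, rfl⟩
    · rintro ⟨⟨a, b⟩, ⟨hab, ha⟩, rfl⟩
      simp only [mem_preimage, mem_singleton_iff] at ha
      subst ha; exact hab
  rw [this]
  exact ((hK.inter_right (isClosed_singleton.preimage continuous_fst)).image continuous_snd)

lemma fiber_nonempty {I Y : Type*} {K : Set (I × Y)} (hπ : Prod.fst '' K = Set.univ) (x : I) :
    (fiber K x).Nonempty := by
  have : x ∈ Prod.fst '' K := by rw [hπ]; trivial
  obtain ⟨⟨a, b⟩, hab, ha⟩ := this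
  exact ⟨b, by simpa [fiber, ← ha] using hab⟩

lemma fiber_subset_snd {I Y : Type*} (K : Set (I × Y)) (x : I) :
    fiber K x ⊆ Prod.snd '' K := fun y hy => ⟨(x, y), hy, rfl⟩

/-- Let `I` be a compact metric space and `Y` a complete metric space.
The space `𝒮` of compact subsets `K ⊆ I × Y` with `π(K) = I`, equipped with the uniform
distance `d_𝒮(K, K') = sup_x d_H(K(x), K'(x))`, is complete: every Cauchy sequence in
`𝒮` converges (for `d_𝒮`) to an element of `𝒮`. -/
theorem stmt_3 {I Y : Type*} [MetricSpace I] [CompactSpace I]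
    [MetricSpace Y] [CompleteSpace Y]
    (K : ℕ → Set (I × Y))
    (hcp : ∀ n, IsCompact (K n)) (hπ : ∀ n, Prod.fst '' K n = Set.univ)
    (hcauchy : ∀ ε > (0 : ℝ), ∃ N : ℕ, ∀ m ≥ N, ∀ n ≥ N, dS (K m) (K n) < ε) :
    ∃ L : Set (I × Y), IsCompact L ∧ Prod.fst '' L = Set.univ ∧
      Filter.Tendsto (fun n => dS (K n) L) Filter.atTop (nhds 0) := by
  rcases isEmpty_or_nonempty I with hI | hI
  · refine ⟨∅, isCompact_empty, by simp [Set.univ_eq_empty_iff.2 hI], ?_⟩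
    have h0 : ∀ n, dS (K n) (∅ : Set (I × Y)) = 0 := fun n => Real.iSup_of_isEmpty _
    simp only [h0]; exact (tendsto_const_nhds : Tendsto (fun _ : ℕ => (0:ℝ)) atTop (nhds 0))
  · -- fibers as nonempty compacts
    set seq : I → ℕ → NonemptyCompacts Y := fun x n =>
      ⟨⟨fiber (K n) x, fiber_compact (hcp n) x⟩, fiber_nonempty (hπ n) x⟩ with hseq
    have hco : ∀ x n, (seq x n : Set Y) = fiber (K n) x := fun _ _ => rfl
    have hdist : ∀ x m n,
        dist (seq x m) (seq x n) = hausdorffDist (fiber (K m) x) (fiber (K n) x) :=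
      fun _ _ _ => rfl
    -- pointwise Hausdorff distance is at most dS
    have hb : ∀ m n x, hausdorffDist (fiber (K m) x) (fiber (K n) x) ≤ dS (K m) (K n) := by
      intro m n x
      refine le_ciSup (f := fun x => hausdorffDist (fiber (K m) x) (fiber (K n) x)) ?_ x
      refine ⟨Metric.diam (Prod.snd '' K m ∪ Prod.snd '' K n), ?_⟩
      rintro r ⟨x, rfl⟩
      have hbm : Bornology.IsBounded (Prod.snd '' K m ∪ Prod.snd '' K n) :=
        (((hcp m).image continuous_snd).isBounded.union
          ((hcp n).image continuous_snd).isBounded)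
      calc hausdorffDist (fiber (K m) x) (fiber (K n) x)
          ≤ Metric.diam (fiber (K m) x ∪ fiber (K n) x) :=
            hausdorffDist_le_diam (fiber_nonempty (hπ m) x)
              (fiber_compact (hcp m) x).isBounded (fiber_nonempty (hπ n) x)
              (fiber_compact (hcp n) x).isBounded
        _ ≤ Metric.diam (Prod.snd '' K m ∪ Prod.snd '' K n) :=
            Metric.diam_mono (Set.union_subset_union (fiber_subset_snd _ _) (fiber_subset_snd _ _)) hbm
    have hcs : ∀ x, CauchySeq (seq x) := by
      intro x
      rw [Metric.cauchySeq_iff]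
      intro ε hε
      obtain ⟨N, hN⟩ := hcauchy ε hε
      exact ⟨N, fun m hm n hn =>
        lt_of_le_of_lt (le_of_eq (hdist x m n) |>.trans (hb m n x)) (hN m hm n hn)⟩
    choose F hF using fun x => cauchySeq_tendsto_of_complete (hcs x)
    -- uniform convergence
    have hunif : ∀ ε > (0:ℝ), ∃ N, ∀ n ≥ N, ∀ x, dist (seq x n) (F x) ≤ ε := by
      intro ε hε
      obtain ⟨N, hN⟩ := hcauchy ε hε
      refine ⟨N, fun n hn x => ?_⟩
      have h1 : Tendsto (fun m => dist (seq x n) (seq x m)) atTop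
          (nhds (dist (seq x n) (F x))) := tendsto_const_nhds.dist (hF x)
      refine le_of_tendsto h1 ?_
      filter_upwards [eventually_ge_atTop N] with m hm
      exact ((le_of_eq (hdist x n m)).trans (hb n m x)).trans_lt (hN n hn m hm) |>.le
    set L : Set (I × Y) := {p : I × Y | p.2 ∈ (F p.1 : Set Y)} with hLdef
    have hfibL : ∀ x, fiber L x = (F x : Set Y) := fun x => rfl
    have hLd : ∀ n x, hausdorffDist (fiber (K n) x) (fiber L x) = dist (seq x n) (F x) := by
      intro n x
      rw [hfibL, NonemptyCompacts.dist_eq, hco]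
    have hdS : ∀ ε > (0:ℝ), ∃ N, ∀ n ≥ N, dS (K n) L ≤ ε := by
      intro ε hε
      obtain ⟨N, hN⟩ := hunif ε hε
      refine ⟨N, fun n hn => Real.iSup_le (fun x => ?_) hε.le⟩
      rw [hLd n x]; exact hN n hn x
    -- L is closed
    have hclosed : IsClosed L := by
      refine IsSeqClosed.isClosed ?_
      intro p q hp hq
      have key : ∀ ε > (0:ℝ), infDist q.2 (F q.1 : Set Y) ≤ ε := by
        intro ε hε
        obtain ⟨N, hN⟩ := hunif (ε/4) (by positivity)
        have hfin : ∀ x n, EMetric.hausdorffEdist (F x : Set Y) (fiber (K n) x) ≠ ⊤ := fun x n =>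
          hausdorffEdist_ne_top_of_nonempty_of_bounded (F x).nonempty
            (fiber_nonempty (hπ n) x) (F x).isCompact.isBounded
            (fiber_compact (hcp n) x).isBounded
        have hz : ∀ k, ∃ z, z ∈ fiber (K N) (p k).1 ∧ dist (p k).2 z < ε/2 := by
          intro k
          have h1 : hausdorffDist (F (p k).1 : Set Y) (fiber (K N) (p k).1) < ε/2 := by
            rw [hausdorffDist_comm, ← hfibL, hLd N (p k).1]
            exact lt_of_le_of_lt (hN N le_rfl (p k).1) (by linarith)
          exact exists_dist_lt_of_hausdorffDist_lt (hp k) h1 (hfin (p k).1 N)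
        choose z hz1 hz2 using hz
        have hmemK : ∀ k, ((p k).1, z k) ∈ K N := fun k => hz1 k
        obtain ⟨a, haK, φ, hφ, hlim⟩ := (hcp N).tendsto_subseq hmemK
        have hq' : Tendsto (fun k => p (φ k)) atTop (nhds q) := hq.comp hφ.tendsto_atTop
        have h1 : Tendsto (fun k => (p (φ k)).1) atTop (nhds q.1) :=
          (continuous_fst.tendsto q).comp hq'
        have h2 : Tendsto (fun k => (p (φ k)).1) atTop (nhds a.1) := by
          have := (continuous_fst.tendsto a).comp hlim
          simpa [Function.comp_def] using this
        have ha1 : a.1 = q.1 := tendsto_nhds_unique h2 h1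
        have hd : dist q.2 a.2 ≤ ε/2 := by
          have h3 : Tendsto (fun k => dist (p (φ k)).2 (z (φ k))) atTop
              (nhds (dist q.2 a.2)) :=
            by
              have h4 := (continuous_snd.tendsto a).comp hlim
              simp only [Function.comp_def] at h4
              exact ((continuous_snd.tendsto q).comp hq').dist h4
          exact le_of_tendsto h3 (Eventually.of_forall fun k => (hz2 (φ k)).le)
        have hmem2 : a.2 ∈ fiber (K N) q.1 := by
          have : (q.1, a.2) ∈ K N := by rw [← ha1]; exact haK
          exact this
        have hstep : hausdorffDist (fiber (K N) q.1) (F q.1 : Set Y) ≤ ε/4 := by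
          rw [← hfibL, hLd N q.1]; exact hN N le_rfl q.1
        calc infDist q.2 (F q.1 : Set Y)
            ≤ infDist q.2 (fiber (K N) q.1)
              + hausdorffDist (fiber (K N) q.1) (F q.1 : Set Y) :=
              infDist_le_infDist_add_hausdorffDist (by
                rw [hausdorffEdist_comm]; exact hfin q.1 N)
          _ ≤ dist q.2 a.2 + ε/4 := add_le_add (infDist_le_dist_of_mem hmem2) hstep
          _ ≤ ε/2 + ε/4 := by linarith
          _ ≤ ε := by linarith
      have h0 : infDist q.2 (F q.1 : Set Y) = 0 := by
        by_contra h
        have hpos : 0 < infDist q.2 (F q.1 : Set Y) :=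
          lt_of_le_of_ne infDist_nonneg (Ne.symm h)
        have := key (infDist q.2 (F q.1 : Set Y) / 2) (by linarith)
        linarith
      exact ((F q.1).isCompact.isClosed.mem_iff_infDist_zero (F q.1).nonempty).2 h0
    -- L is totally bounded
    have htb : TotallyBounded L := by
      rw [Metric.totallyBounded_iff]
      intro ε hε
      obtain ⟨N, hN⟩ := hunif (ε/4) (by positivity)
      obtain ⟨t, htf, hcov⟩ :=
        Metric.totallyBounded_iff.1 (hcp N).totallyBounded (ε/2) (by positivity)
      refine ⟨t, htf, ?_⟩
      rintro ⟨x, y⟩ hxy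
      have h1 : hausdorffDist (F x : Set Y) (fiber (K N) x) < ε/2 := by
        rw [hausdorffDist_comm, ← hfibL, hLd N x]
        exact lt_of_le_of_lt (hN N le_rfl x) (by linarith)
      obtain ⟨z, hz, hdz⟩ := exists_dist_lt_of_hausdorffDist_lt (show y ∈ (F x : Set Y) from hxy) h1
        (hausdorffEdist_ne_top_of_nonempty_of_bounded (F x).nonempty
          (fiber_nonempty (hπ N) x) (F x).isCompact.isBounded
          (fiber_compact (hcp N) x).isBounded)
      have hzK : ((x, z) : I × Y) ∈ K N := hz
      obtain ⟨c, hc, hcb⟩ := Set.mem_iUnion₂.1 (hcov hzK)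
      refine Set.mem_iUnion₂.2 ⟨c, hc, ?_⟩
      have hdxy : dist ((x, y) : I × Y) (x, z) = dist y z := by
        simp [Prod.dist_eq, dist_nonneg]
      have : dist ((x, y) : I × Y) c < ε := by
        calc dist ((x, y) : I × Y) c ≤ dist ((x, y) : I × Y) (x, z) + dist ((x, z) : I × Y) c :=
              dist_triangle _ _ _
          _ < ε/2 + ε/2 := add_lt_add (hdxy ▸ hdz) (mem_ball.1 hcb)
          _ = ε := by ring
      exact mem_ball.2 this
    have hcomp : IsCompact L := TotallyBounded.isCompact_of_isClosed htb hclosed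
    refine ⟨L, hcomp, ?_, ?_⟩
    · apply Set.eq_univ_of_forall
      intro x
      obtain ⟨y, hy⟩ := (F x).nonempty
      exact ⟨(x, y), hy, rfl⟩
    · rw [Metric.tendsto_atTop]
      intro ε hε
      obtain ⟨N, hN⟩ := hdS (ε/2) (by positivity)
      refine ⟨N, fun n hn => ?_⟩
      have h0 : 0 ≤ dS (K n) L := Real.iSup_nonneg fun x => hausdorffDist_nonneg
      rw [Real.dist_eq, sub_zero, abs_of_nonneg h0]
      exact lt_of_le_of_lt (hN n hn) (by linarith)
end

section
/- Under the standard-form hypotheses (i')–(iii'), there exists a unique compact set K ⊆ I × ℝ^d with π(K) = I such that the closure of T̃(K) := ⋃_{α∈𝒜} T̃_α(K ∩ (I_α × ℝ^d)) equals K. -/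
open MeasureTheory

open RealInnerProductSpace in
lemma aux_adjoint_bound {d : ℕ} (A Wm : EuclideanSpace ℝ (Fin d) →L[ℝ] EuclideanSpace ℝ (Fin d))
    (C : ℝ) (hC : 0 < C)
    (hexp : ∀ v, C * ‖v‖ ≤ ‖A v‖)
    (h1 : ∀ y, ContinuousLinearMap.adjoint A (Wm y) = y)
    (h2 : ∀ y, Wm (ContinuousLinearMap.adjoint A y) = y)
    (y : EuclideanSpace ℝ (Fin d)) : ‖Wm y‖ ≤ C⁻¹ * ‖y‖ := by
  set v := Wm y with hv
  rcases eq_or_ne v 0 with h | h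
  · rw [h, norm_zero]; positivity
  · have hAW : A.comp (ContinuousLinearMap.adjoint Wm) = ContinuousLinearMap.id ℝ _ := by
      have h' : (Wm.comp (ContinuousLinearMap.adjoint A)) = ContinuousLinearMap.id ℝ _ :=
        ContinuousLinearMap.ext fun z => h2 z
      calc A.comp (ContinuousLinearMap.adjoint Wm)
          = ContinuousLinearMap.adjoint (Wm.comp (ContinuousLinearMap.adjoint A)) := by
            rw [ContinuousLinearMap.adjoint_comp, ContinuousLinearMap.adjoint_adjoint]
        _ = _ := by rw [h', ContinuousLinearMap.adjoint_id]
    set u := ContinuousLinearMap.adjoint Wm v with hu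
    have hAu : A u = v := by
      have := congrArg (fun (L : _ →L[ℝ] _) => L v) hAW
      simpa using this
    have hnu : C * ‖u‖ ≤ ‖v‖ := by rw [← hAu]; exact hexp u
    have hvy : (‖v‖ : ℝ)^2 = ⟪y, u⟫ := by
      have h3 : ⟪(ContinuousLinearMap.adjoint A) v, u⟫ = ⟪v, A u⟫ :=
        ContinuousLinearMap.adjoint_inner_left A u v
      rw [hv, h1 y, ← hv, hAu, real_inner_self_eq_norm_sq] at h3
      linarith [h3]
    have hCS : ⟪y, u⟫ ≤ ‖y‖ * ‖u‖ := real_inner_le_norm y u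
    have hvpos : 0 < ‖v‖ := norm_pos_iff.2 h
    rw [inv_mul_eq_div, le_div_iff₀ hC]
    nlinarith [mul_le_mul_of_nonneg_left hnu (norm_nonneg y),
      mul_le_mul_of_nonneg_left hCS hC.le, hvy, hvpos, hC]

/-- Under the standard-form hypotheses (i')–(iii') — `I ⊆ ℝ^d` a
nonempty compact set equal to the closure of its interior; `{I_α}` a countable family of
compact subsets of `I`, each the closure of its interior, covering `I`, with pairwise
intersections of Lebesgue measure zero; each `T_α : I_α → T_α(I_α) ⊆ I` a (C¹)
diffeomorphism whose Jacobian `T'_α(x)` expands uniformly by a constant `C > 1`, with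
`⋃ T_α(I_α) = I`; `W α x = ((T'_α(x))ᵀ)⁻¹` the inverse of the transpose (adjoint) of the
Jacobian; and `f_α : I_α → ℝ^d` continuous and uniformly bounded — there exists a unique
compact set `K ⊆ I × ℝ^d` with `π(K) = I` such that the closure of
`T̃(K) = ⋃_α T̃_α(K ∩ (I_α × ℝ^d))` equals `K`, where
`T̃_α(x, y) = (T_α x, W α x y + f_α x)`. -/
theorem stmt_6 {d : ℕ} {𝒜 : Type*} [Countable 𝒜]
    (I : Set (EuclideanSpace ℝ (Fin d)))
    (hIne : I.Nonempty) (hIcp : IsCompact I) (hIreg : I = closure (interior I))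
    (Iα : 𝒜 → Set (EuclideanSpace ℝ (Fin d)))
    (hsub : ∀ α, Iα α ⊆ I) (hcp : ∀ α, IsCompact (Iα α))
    (hreg : ∀ α, Iα α = closure (interior (Iα α)))
    (hcover : ⋃ α, Iα α = I)
    (hnull : ∀ α β, α ≠ β → volume (Iα α ∩ Iα β) = 0)
    (T : 𝒜 → EuclideanSpace ℝ (Fin d) → EuclideanSpace ℝ (Fin d))
    (T' : 𝒜 → EuclideanSpace ℝ (Fin d) →
      (EuclideanSpace ℝ (Fin d) →L[ℝ] EuclideanSpace ℝ (Fin d)))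
    (hTinj : ∀ α, Set.InjOn (T α) (Iα α))
    (hTim : ∀ α, T α '' Iα α ⊆ I)
    (hTderiv : ∀ α, ∀ x ∈ Iα α, HasFDerivWithinAt (T α) (T' α x) (Iα α) x)
    (hT'cont : ∀ α, ContinuousOn (T' α) (Iα α))
    (C : ℝ) (hC : 1 < C)
    (hexp : ∀ α, ∀ x ∈ Iα α, ∀ v : EuclideanSpace ℝ (Fin d), C * ‖v‖ ≤ ‖T' α x v‖)
    (hTcover : ⋃ α, T α '' Iα α = I)
    (W : 𝒜 → EuclideanSpace ℝ (Fin d) →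
      (EuclideanSpace ℝ (Fin d) →L[ℝ] EuclideanSpace ℝ (Fin d)))
    (hW : ∀ α, ∀ x ∈ Iα α, ∀ y : EuclideanSpace ℝ (Fin d),
      ContinuousLinearMap.adjoint (T' α x) (W α x y) = y ∧
      W α x (ContinuousLinearMap.adjoint (T' α x) y) = y)
    (hWcont : ∀ α, ContinuousOn (W α) (Iα α))
    (f : 𝒜 → EuclideanSpace ℝ (Fin d) → EuclideanSpace ℝ (Fin d))
    (hfcont : ∀ α, ContinuousOn (f α) (Iα α))
    (B : ℝ) (hfbd : ∀ α, ∀ x ∈ Iα α, ‖f α x‖ ≤ B) :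
    ∃! K : Set (EuclideanSpace ℝ (Fin d) × EuclideanSpace ℝ (Fin d)),
      IsCompact K ∧ Prod.fst '' K = I ∧
      closure (⋃ α : 𝒜,
        (fun p : EuclideanSpace ℝ (Fin d) × EuclideanSpace ℝ (Fin d) =>
          (T α p.1, W α p.1 p.2 + f α p.1)) ''
        (K ∩ (Iα α ×ˢ (Set.univ : Set (EuclideanSpace ℝ (Fin d)))))) = K := by
  classical
  have hC0 : (0:ℝ) < C := lt_trans one_pos hC
  set r : ℝ := C⁻¹ with hr
  have hr0 : (0:ℝ) ≤ r := by positivity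
  have hr1 : r < 1 := by rw [hr]; exact inv_lt_one_of_one_lt₀ hC
  have h1r : (0:ℝ) < 1 - r := by linarith
  have hB0 : (0:ℝ) ≤ B := by
    obtain ⟨x, hx⟩ := hIne
    rw [← hcover] at hx
    obtain ⟨s, ⟨α, rfl⟩, hxα⟩ := hx
    exact (norm_nonneg _).trans (hfbd α x hxα)
  set R : ℝ := B / (1 - r) with hR
  have hR0 : (0:ℝ) ≤ R := div_nonneg hB0 h1r.le
  have hRB : r * R + B = R := by rw [hR]; field_simp; ring
  -- the fiberwise contraction bound
  have hWb : ∀ α, ∀ x ∈ Iα α, ∀ y, ‖W α x y‖ ≤ r * ‖y‖ := fun α x hx y =>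
    aux_adjoint_bound (T' α x) (W α x) C hC0 (hexp α x hx)
      (fun y => (hW α x hx y).1) (fun y => (hW α x hx y).2) y
  -- the transfer operator on sets
  set G : Set (EuclideanSpace ℝ (Fin d) × EuclideanSpace ℝ (Fin d)) →
      Set (EuclideanSpace ℝ (Fin d) × EuclideanSpace ℝ (Fin d)) := fun K =>
    ⋃ α : 𝒜, (fun p : EuclideanSpace ℝ (Fin d) × EuclideanSpace ℝ (Fin d) =>
      (T α p.1, W α p.1 p.2 + f α p.1)) ''
      (K ∩ (Iα α ×ˢ (Set.univ : Set (EuclideanSpace ℝ (Fin d))))) with hGdef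
  set F : Set (EuclideanSpace ℝ (Fin d) × EuclideanSpace ℝ (Fin d)) →
      Set (EuclideanSpace ℝ (Fin d) × EuclideanSpace ℝ (Fin d)) := fun K =>
    closure (G K) with hFdef
  show ∃! K, IsCompact K ∧ Prod.fst '' K = I ∧ F K = K
  have hFG : ∀ K, F K = closure (G K) := fun _ => rfl
  -- membership in G
  have hGmem : ∀ (K : Set (EuclideanSpace ℝ (Fin d) × EuclideanSpace ℝ (Fin d))) q,
      q ∈ G K ↔ ∃ α, ∃ p, (p ∈ K ∧ p.1 ∈ Iα α) ∧
        (T α p.1, W α p.1 p.2 + f α p.1) = q := by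
    intro K q
    rw [hGdef]
    simp only [Set.mem_iUnion, Set.mem_image, Set.mem_inter_iff, Set.mem_prod,
      Set.mem_univ, and_true]
  have hGmono : ∀ K K' , K ⊆ K' → G K ⊆ G K' := by
    intro K K' hKK q hq
    rw [hGmem] at hq ⊢
    obtain ⟨α, p, ⟨hp, hp1⟩, hq⟩ := hq
    exact ⟨α, p, ⟨hKK hp, hp1⟩, hq⟩
  set K₀ : Set (EuclideanSpace ℝ (Fin d) × EuclideanSpace ℝ (Fin d)) :=
    I ×ˢ Metric.closedBall 0 R with hK₀
  have hK₀cp : IsCompact K₀ := hIcp.prod (isCompact_closedBall _ _)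
  have hK₀cl : IsClosed K₀ := hK₀cp.isClosed
  have hmemK₀ : ∀ p : EuclideanSpace ℝ (Fin d) × EuclideanSpace ℝ (Fin d),
      p ∈ K₀ ↔ p.1 ∈ I ∧ ‖p.2‖ ≤ R := by
    intro p
    rw [hK₀, Set.mem_prod, Metric.mem_closedBall, dist_zero_right]
  -- G maps subsets of K₀ into K₀
  have hGK₀ : ∀ K, K ⊆ K₀ → G K ⊆ K₀ := by
    intro K hK q hq
    rw [hGmem] at hq
    obtain ⟨α, p, ⟨hp, hp1⟩, rfl⟩ := hq
    rw [hmemK₀]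
    constructor
    · exact hTim α ⟨p.1, hp1, rfl⟩
    · have h1 : ‖W α p.1 p.2‖ ≤ r * ‖p.2‖ := hWb α p.1 hp1 p.2
      have h2 : ‖p.2‖ ≤ R := ((hmemK₀ p).1 (hK hp)).2
      calc ‖W α p.1 p.2 + f α p.1‖ ≤ ‖W α p.1 p.2‖ + ‖f α p.1‖ := norm_add_le _ _
        _ ≤ r * R + B := by
            have := hfbd α p.1 hp1
            have := mul_le_mul_of_nonneg_left h2 hr0
            linarith
        _ = R := hRB
  have hFK₀ : ∀ K, K ⊆ K₀ → F K ⊆ K₀ := fun K hK => by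
    rw [hFG]; exact closure_minimal (hGK₀ K hK) hK₀cl
  -- iterates
  set A : ℕ → Set (EuclideanSpace ℝ (Fin d) × EuclideanSpace ℝ (Fin d)) :=
    fun n => F^[n] K₀ with hA
  have hA0 : A 0 = K₀ := rfl
  have hAsucc : ∀ n, A (n+1) = F (A n) := fun n => Function.iterate_succ_apply' F n K₀
  have hAsub : ∀ n, A n ⊆ K₀ := by
    intro n; induction n with
    | zero => exact le_refl _
    | succ n ih => rw [hAsucc]; exact hFK₀ _ ih
  have hAclosed : ∀ n, IsClosed (A n) := by
    intro n; cases n with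
    | zero => exact hK₀cl
    | succ n => rw [hAsucc, hFG]; exact isClosed_closure
  have hFmono : ∀ K K', K ⊆ K' → F K ⊆ F K' := fun K K' h => by
    rw [hFG, hFG]; exact closure_mono (hGmono K K' h)
  have hAmono : ∀ n, A (n+1) ⊆ A n := by
    intro n; induction n with
    | zero => rw [hAsucc, hA0]; exact hFK₀ _ (le_refl _)
    | succ n ih =>
      have h := hFmono _ _ ih
      rw [← hAsucc n] at h
      rw [← hAsucc (n+1)] at h
      exact h
  -- projection of iterates is I
  have hAproj : ∀ n, ∀ x ∈ I, ∃ y, (x, y) ∈ A n := by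
    intro n
    induction n with
    | zero =>
      intro x hx
      exact ⟨0, (hmemK₀ _).2 ⟨hx, by simpa using hR0⟩⟩
    | succ n ih =>
      intro x hx
      rw [← hTcover] at hx
      obtain ⟨s, ⟨α, rfl⟩, z, hzα, rfl⟩ := hx
      obtain ⟨y, hy⟩ := ih z (hsub α hzα)
      refine ⟨W α z y + f α z, ?_⟩
      rw [hAsucc, hFG]
      apply subset_closure
      rw [hGmem]
      exact ⟨α, (z, y), ⟨hy, hzα⟩, rfl⟩
  set K : Set (EuclideanSpace ℝ (Fin d) × EuclideanSpace ℝ (Fin d)) := ⋂ n, A n with hK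
  have hKsubK₀ : K ⊆ K₀ := (Set.iInter_subset A 0).trans (le_of_eq hA0)
  have hKsubA : ∀ n, K ⊆ A n := fun n => Set.iInter_subset A n
  have hKcl : IsClosed K := isClosed_iInter hAclosed
  have hKcp : IsCompact K := hK₀cp.of_isClosed_subset hKcl hKsubK₀
  have hKmem : ∀ p, p ∈ K ↔ ∀ n, p ∈ A n := fun p => Set.mem_iInter
  -- projection of K is I
  have hKproj : Prod.fst '' K = I := by
    apply subset_antisymm
    · rintro _ ⟨p, hp, rfl⟩
      exact ((hmemK₀ p).1 (hKsubK₀ hp)).1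
    · intro x hx
      have hne : (⋂ n, {y | (x, y) ∈ A n}).Nonempty := by
        apply IsCompact.nonempty_iInter_of_sequence_nonempty_isCompact_isClosed
        · intro n
          exact fun y hy => hAmono n hy
        · intro n
          obtain ⟨y, hy⟩ := hAproj n x hx
          exact ⟨y, hy⟩
        · refine IsCompact.of_isClosed_subset (isCompact_closedBall (0 : EuclideanSpace ℝ (Fin d)) R)
            ((hAclosed 0).preimage (Continuous.prodMk_right x)) ?_
          intro y hy
          have := ((hmemK₀ (x, y)).1 (hAsub 0 hy)).2
          simpa [Metric.mem_closedBall, dist_zero_right] using this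
        · intro n
          exact (hAclosed n).preimage (Continuous.prodMk_right x)
      obtain ⟨y, hy⟩ := hne
      refine ⟨(x, y), ?_, rfl⟩
      rw [hKmem]
      intro n
      exact Set.mem_iInter.1 hy n
  have hFKsubK : F K ⊆ K := by
    intro p hp
    rw [hKmem]
    intro n
    cases n with
    | zero => exact hFK₀ K hKsubK₀ hp
    | succ n => rw [hAsucc]; exact hFmono K (A n) (hKsubA n) hp
  have hFKcp : IsCompact (F K) := hK₀cp.of_isClosed_subset
    (by rw [hFG]; exact isClosed_closure) (hFK₀ K hKsubK₀)
  -- the key contraction lemma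
  have contr : ∀ (As Kt : Set (EuclideanSpace ℝ (Fin d) × EuclideanSpace ℝ (Fin d))) (Δ : ℝ),
      0 ≤ Δ → IsCompact (F Kt) →
      (∀ p ∈ As, ∃ y', (p.1, y') ∈ Kt ∧ ‖p.2 - y'‖ ≤ Δ) →
      ∀ q ∈ F As, ∃ q' ∈ F Kt, q.1 = q'.1 ∧ ‖q.2 - q'.2‖ ≤ r * Δ := by
    intro As Kt Δ hΔ hcFKt hgap
    set E' := (fun z : (EuclideanSpace ℝ (Fin d) × EuclideanSpace ℝ (Fin d)) ×
        EuclideanSpace ℝ (Fin d) => (z.1.1, z.1.2 + z.2)) ''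
      ((F Kt) ×ˢ Metric.closedBall 0 (r * Δ)) with hE'
    have hE'cp : IsCompact E' :=
      (hcFKt.prod (isCompact_closedBall _ _)).image (by fun_prop)
    have hsubE : G As ⊆ E' := by
      intro q hq
      rw [hGmem] at hq
      obtain ⟨α, p, ⟨hpA, hpα⟩, rfl⟩ := hq
      obtain ⟨y', hy'K, hy'd⟩ := hgap p hpA
      refine ⟨((T α p.1, W α p.1 y' + f α p.1), W α p.1 p.2 - W α p.1 y'), ⟨?_, ?_⟩, ?_⟩
      · rw [hFG]
        apply subset_closure
        rw [hGmem]
        exact ⟨α, (p.1, y'), ⟨hy'K, hpα⟩, rfl⟩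
      · rw [mem_closedBall_zero_iff, ← map_sub]
        exact le_trans (hWb α p.1 hpα _) (mul_le_mul_of_nonneg_left hy'd hr0)
      · have heq : (W α p.1 y' + f α p.1) + (W α p.1 p.2 - W α p.1 y')
            = W α p.1 p.2 + f α p.1 := by abel
        show ((T α p.1, W α p.1 y' + f α p.1).1, (T α p.1, W α p.1 y' + f α p.1).2
          + (W α p.1 p.2 - W α p.1 y')) = _
        rw [heq]
    have hFsubE : F As ⊆ E' := by
      rw [hFG]; exact closure_minimal hsubE hE'cp.isClosed
    intro q hq
    obtain ⟨⟨q', b⟩, hz, rfl⟩ := hFsubE hq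
    refine ⟨q', hz.1, rfl, ?_⟩
    simpa using (mem_closedBall_zero_iff.1 hz.2)
  -- gap estimates between iterates and K
  have hGap : ∀ n, ∀ p ∈ A n, ∃ y', (p.1, y') ∈ K ∧ ‖p.2 - y'‖ ≤ (2 * R) * r ^ n := by
    intro n
    induction n with
    | zero =>
      intro p hp
      have hp1 : p.1 ∈ I := ((hmemK₀ p).1 (hAsub 0 hp)).1
      obtain ⟨q, hqK, hq1⟩ := hKproj.symm ▸ hp1
      refine ⟨q.2, ?_, ?_⟩
      · rw [show (p.1, q.2) = q from Prod.ext hq1.symm rfl]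
        exact hqK
      · have h1 : ‖p.2‖ ≤ R := ((hmemK₀ p).1 (hAsub 0 hp)).2
        have h2 : ‖q.2‖ ≤ R := ((hmemK₀ q).1 (hKsubK₀ hqK)).2
        calc ‖p.2 - q.2‖ ≤ ‖p.2‖ + ‖q.2‖ := norm_sub_le _ _
          _ ≤ (2 * R) * r ^ 0 := by simp; linarith
    | succ n ih =>
      intro p hp
      rw [hAsucc] at hp
      obtain ⟨q', hq'F, hq1, hq2⟩ := contr (A n) K ((2 * R) * r ^ n)
        (by positivity) hFKcp ih p hp
      refine ⟨q'.2, ?_, ?_⟩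
      · have : (p.1, q'.2) = q' := Prod.ext hq1 rfl
        rw [this]
        exact hFKsubK hq'F
      · calc ‖p.2 - q'.2‖ ≤ r * ((2 * R) * r ^ n) := hq2
          _ = (2 * R) * r ^ (n + 1) := by ring
  -- limit lemma
  have hlim : ∀ (S : Set (EuclideanSpace ℝ (Fin d) × EuclideanSpace ℝ (Fin d))),
      IsClosed S → ∀ (c : ℝ), ∀ p, (∀ n : ℕ, ∃ q ∈ S, dist p q ≤ c * r ^ n) → p ∈ S := by
    intro S hS c p hp
    rw [← hS.closure_eq]
    rw [Metric.mem_closure_iff]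
    intro ε hε
    have htend : Filter.Tendsto (fun n : ℕ => c * r ^ n) Filter.atTop (nhds 0) := by
      have := (tendsto_pow_atTop_nhds_zero_of_lt_one hr0 hr1).const_mul c
      simpa using this
    obtain ⟨n, hn⟩ := (htend.eventually_lt_const hε).exists
    obtain ⟨q, hqS, hq⟩ := hp n
    exact ⟨q, hqS, lt_of_le_of_lt hq hn⟩
  have hKsubFK : K ⊆ F K := by
    intro p hp
    refine hlim (F K) (by rw [hFG]; exact isClosed_closure) (2 * R) p ?_
    intro n
    obtain ⟨q', hq'F, hq1, hq2⟩ := contr (A n) K ((2 * R) * r ^ n)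
      (by positivity) hFKcp (hGap n) p (by rw [← hAsucc]; exact hKsubA (n+1) hp)
    refine ⟨q', hq'F, ?_⟩
    rw [Prod.dist_eq, hq1, dist_self, dist_eq_norm]
    have h1 : ‖p.2 - q'.2‖ ≤ (2 * R) * r ^ n := by
      refine hq2.trans ?_
      have : r * ((2 * R) * r ^ n) = (2 * R) * r ^ n * r := by ring
      nlinarith [pow_nonneg hr0 n, hR0, hr0, hr1]
    simpa using h1
  have hFKeq : F K = K := subset_antisymm hFKsubK hKsubFK
  -- uniqueness half: any invariant compact with full projection contains/is contained
  have huniq : ∀ K₁ K₂ : Set (EuclideanSpace ℝ (Fin d) × EuclideanSpace ℝ (Fin d)),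
      IsCompact K₁ → IsCompact K₂ → Prod.fst '' K₁ = I → Prod.fst '' K₂ = I →
      F K₁ = K₁ → F K₂ = K₂ → K₁ ⊆ K₂ := by
    intro K₁ K₂ h1c h2c h1p h2p h1F h2F
    obtain ⟨M₀, hM₀⟩ := ((h1c.union h2c).image continuous_snd).isBounded.subset_closedBall 0
    set M : ℝ := max M₀ 0 with hM
    have hMn : (0:ℝ) ≤ M := le_max_right _ _
    have hMb : ∀ p ∈ K₁ ∪ K₂, ‖p.2‖ ≤ M := by
      intro p hp
      have := hM₀ ⟨p, hp, rfl⟩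
      rw [Metric.mem_closedBall, dist_zero_right] at this
      exact this.trans (le_max_left _ _)
    have hgap : ∀ n, ∀ p ∈ K₁, ∃ y', (p.1, y') ∈ K₂ ∧ ‖p.2 - y'‖ ≤ (2 * M) * r ^ n := by
      intro n
      induction n with
      | zero =>
        intro p hp
        have hp1 : p.1 ∈ I := h1p ▸ ⟨p, hp, rfl⟩
        obtain ⟨q, hqK, hq1⟩ := h2p.symm ▸ hp1
        refine ⟨q.2, ?_, ?_⟩
        · rw [show (p.1, q.2) = q from Prod.ext hq1.symm rfl]
          exact hqK
        · have := hMb p (Set.mem_union_left _ hp)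
          have := hMb q (Set.mem_union_right _ hqK)
          calc ‖p.2 - q.2‖ ≤ ‖p.2‖ + ‖q.2‖ := norm_sub_le _ _
            _ ≤ (2 * M) * r ^ 0 := by simp; linarith
      | succ n ih =>
        intro p hp
        rw [← h1F] at hp
        obtain ⟨q', hq'F, hq1, hq2⟩ := contr K₁ K₂ ((2 * M) * r ^ n)
          (by positivity) (by rw [h2F]; exact h2c) ih p hp
        refine ⟨q'.2, ?_, ?_⟩
        · rw [show (p.1, q'.2) = q' from Prod.ext hq1 rfl]
          rw [← h2F]
          exact hq'F
        · calc ‖p.2 - q'.2‖ ≤ r * ((2 * M) * r ^ n) := hq2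
            _ = (2 * M) * r ^ (n + 1) := by ring
    intro p hp
    refine hlim K₂ h2c.isClosed (2 * M) p ?_
    intro n
    obtain ⟨y', hy', hd⟩ := hgap n p hp
    refine ⟨(p.1, y'), hy', ?_⟩
    rw [Prod.dist_eq]
    simp only [dist_self, dist_eq_norm]
    simpa using hd
  refine ⟨K, ⟨hKcp, hKproj, hFKeq⟩, ?_⟩
  rintro K' ⟨h1c, h1p, h1F⟩
  exact subset_antisymm (huniq K' K h1c hKcp h1p hKproj h1F hFKeq)
    (huniq K K' hKcp h1c hKproj h1p hFKeq h1F)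
end

section
/- Under the standard-form hypotheses (i')–(iii'), let K be the unique compact subset of I × ℝ^d with π(K) = I and closure(T̃(K)) = K, where T̃(K) := ⋃_{α∈𝒜} T̃_α(K_α) and K_α := K ∩ (I_α × ℝ^d). Assume the Lebesgue measure m(K) is strictly positive and m(K ∖ T̃(K)) = 0. Then the sets T̃_α(K_α), α ∈ 𝒜, are pairwise disjoint up to Lebesgue-null sets, and T̃ restricted to K is, up to null sets, a measure-preserving bijection of K with respect to Lebesgue measure: there exist subsets K', K'' ⊆ K of full Lebesgue measure in K such that T̃ maps K' bijectively onto K'' and preserves Lebesgue measure. -/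
open MeasureTheory Set

section Aux

theorem my_meas_inter_preimage {X Y : Type*} [MeasurableSpace X] [TopologicalSpace X]
    [BorelSpace X] [TopologicalSpace Y] [MeasurableSpace Y] [BorelSpace Y]
    {D : Set X} (hD : MeasurableSet D) {g : X → Y} (hg : ContinuousOn g D)
    {B : Set Y} (hB : MeasurableSet B) : MeasurableSet (D ∩ g ⁻¹' B) := by
  have h1 : Measurable (D.restrict g) := (continuousOn_iff_continuous_restrict.1 hg).measurable
  have h2 : MeasurableSet (D.restrict g ⁻¹' B) := h1 hB
  have h3 := (MeasurableEmbedding.subtype_coe hD).measurableSet_image.2 h2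
  convert h3 using 1
  ext x
  simp only [Set.mem_inter_iff, Set.mem_preimage, Set.mem_image, Set.restrict_apply]
  constructor
  · rintro ⟨hxD, hxB⟩; exact ⟨⟨x, hxD⟩, hxB, rfl⟩
  · rintro ⟨⟨y, hy⟩, hB', rfl⟩; exact ⟨hy, hB'⟩

theorem my_tsum_meas_le {X : Type*} [MeasurableSpace X] (μ : Measure X) {ι : Type*} [Countable ι]
    (S B : ι → Set X) (hB : ∀ i, B i ⊆ S i) (hm : ∀ i, MeasurableSet (S i))
    (hae : ∀ i j, i ≠ j → μ (S i ∩ S j) = 0) :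
    ∑' i, μ (B i) ≤ μ (⋃ i, B i) := by
  set S' : ι → Set X := fun i => S i \ ⋃ j : {j : ι // j ≠ i}, S j.1 with hS'
  have hm' : ∀ i, MeasurableSet (S' i) := fun i =>
    (hm i).diff (MeasurableSet.iUnion fun j => hm j.1)
  have hdisj : Pairwise (Function.onFun Disjoint S') := by
    intro i j hij
    refine Set.disjoint_left.2 fun x hxi hxj => ?_
    exact hxj.2 (mem_iUnion.2 ⟨⟨i, hij⟩, hxi.1⟩)
  have hkey : ∀ i, μ (B i) ≤ μ ((⋃ k, B k) ∩ S' i) := by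
    intro i
    have h0 : μ (B i \ S' i) = 0 := by
      refine measure_mono_null (fun x hx => ?_)
        (measure_iUnion_null (s := fun j : {j : ι // j ≠ i} => S i ∩ S j.1)
          fun j => hae i j.1 (Ne.symm j.2))
      obtain ⟨hx1, hx2⟩ := hx
      have hxS : x ∈ S i := hB i hx1
      have : x ∈ ⋃ j : {j : ι // j ≠ i}, S j.1 := by
        by_contra h
        exact hx2 ⟨hxS, h⟩
      obtain ⟨j, hj⟩ := mem_iUnion.1 this
      exact mem_iUnion.2 ⟨j, hxS, hj⟩
    calc μ (B i) ≤ μ (B i ∩ S' i) + μ (B i \ S' i) := measure_le_inter_add_diff μ _ _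
      _ = μ (B i ∩ S' i) := by rw [h0, add_zero]
      _ ≤ μ ((⋃ k, B k) ∩ S' i) :=
        measure_mono (inter_subset_inter_left _ (subset_iUnion B i))
  calc ∑' i, μ (B i) ≤ ∑' i, μ ((⋃ k, B k) ∩ S' i) := ENNReal.tsum_le_tsum hkey
    _ = ∑' i, μ.restrict (⋃ k, B k) (S' i) := by
        refine tsum_congr fun i => ?_
        rw [Measure.restrict_apply (hm' i), inter_comm]
    _ = μ.restrict (⋃ k, B k) (⋃ i, S' i) := (measure_iUnion hdisj hm').symm
    _ ≤ μ.restrict (⋃ k, B k) univ := measure_mono (subset_univ _)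
    _ = μ (⋃ k, B k) := Measure.restrict_apply_univ _

variable {d : ℕ}
local notation "Eu" => EuclideanSpace ℝ (Fin d)

theorem my_adj_det_fact (L A : Eu →L[ℝ] Eu)
    (h1 : ∀ y, ContinuousLinearMap.adjoint L (A y) = y) :
    ENNReal.ofReal |L.det| * ENNReal.ofReal |LinearMap.det (A : Eu →ₗ[ℝ] Eu)| = 1
      ∧ Function.Injective A := by
  have hinj : Function.Injective A := by
    intro a b hab
    have := congrArg (ContinuousLinearMap.adjoint L) hab
    rwa [h1 a, h1 b] at this
  have hadjdet : LinearMap.det ((ContinuousLinearMap.adjoint L : Eu →L[ℝ] Eu) : Eu →ₗ[ℝ] Eu)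
      = L.det := by
    have h : ((ContinuousLinearMap.adjoint L : Eu →L[ℝ] Eu) : Eu →ₗ[ℝ] Eu)
        = LinearMap.adjoint (L : Eu →ₗ[ℝ] Eu) := rfl
    rw [h]
    let b := (EuclideanSpace.basisFun (Fin d) ℝ)
    rw [ContinuousLinearMap.det, ← LinearMap.det_toMatrix b.toBasis,
      ← LinearMap.det_toMatrix b.toBasis, LinearMap.toMatrix_adjoint b b,
      Matrix.det_conjTranspose]
    simp
  have hcomp : (((ContinuousLinearMap.adjoint L : Eu →L[ℝ] Eu) : Eu →ₗ[ℝ] Eu).comp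
      (A : Eu →ₗ[ℝ] Eu)) = LinearMap.id := LinearMap.ext fun y => h1 y
  have hdet1 : L.det * LinearMap.det (A : Eu →ₗ[ℝ] Eu) = 1 := by
    have := congrArg LinearMap.det hcomp
    rwa [LinearMap.det_comp, LinearMap.det_id, hadjdet] at this
  refine ⟨?_, hinj⟩
  rw [← ENNReal.ofReal_mul (abs_nonneg _), ← abs_mul, hdet1, abs_one, ENNReal.ofReal_one]

theorem my_branch_inj (S : Set Eu)
    (T : Eu → Eu) (hTi : Set.InjOn T S)
    (W : Eu → Eu →L[ℝ] Eu) (f : Eu → Eu)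
    (hWi : ∀ x ∈ S, Function.Injective (W x)) :
    Set.InjOn (fun p : Eu × Eu => (T p.1, W p.1 p.2 + f p.1)) (S ×ˢ (univ : Set Eu)) := by
  rintro ⟨a, b⟩ ⟨ha, -⟩ ⟨a', b'⟩ ⟨ha', -⟩ he
  simp only [Prod.mk.injEq] at he
  have h1 : a = a' := hTi ha ha' he.1
  subst h1
  have h2 : W a b = W a b' := add_right_cancel he.2
  exact Prod.mk.injEq .. ▸ ⟨rfl, hWi a ha h2⟩

theorem my_branch_meas (S : Set Eu) (hSm : MeasurableSet S)
    (T : Eu → Eu) (T' : Eu → Eu →L[ℝ] Eu)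
    (hTd : ∀ x ∈ S, HasFDerivWithinAt T (T' x) S x)
    (hTi : Set.InjOn T S)
    (W : Eu → Eu →L[ℝ] Eu) (f : Eu → Eu)
    (hdet : ∀ x ∈ S,
      ENNReal.ofReal |(T' x).det| * ENNReal.ofReal |LinearMap.det (W x).toLinearMap| = 1)
    (A : Set (Eu × Eu)) (hA : MeasurableSet A) (hAS : A ⊆ S ×ˢ (univ : Set Eu))
    (hGA : MeasurableSet ((fun p : Eu × Eu => (T p.1, W p.1 p.2 + f p.1)) '' A)) :
    volume ((fun p : Eu × Eu => (T p.1, W p.1 p.2 + f p.1)) '' A) = volume A := by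
  set G : Eu × Eu → Eu × Eu := fun p => (T p.1, W p.1 p.2 + f p.1) with hG
  have hvol : (volume : Measure (Eu × Eu)) = (volume : Measure Eu).prod volume := rfl
  have hTS : MeasurableSet (T '' S) := by
    refine hSm.image_of_continuousOn_injOn ?_ hTi
    exact fun x hx => (hTd x hx).continuousWithinAt
  have fiber_eq : ∀ x ∈ S, Prod.mk (T x) ⁻¹' (G '' A)
      = (fun b => W x b + f x) '' (Prod.mk x ⁻¹' A) := by
    intro x hx
    ext y'
    constructor
    · rintro ⟨p, hp, hpe⟩
      have hp1 : p.1 ∈ S := (hAS hp).1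
      have h1 : T p.1 = T x := congrArg Prod.fst hpe
      have hpx : p.1 = x := hTi hp1 hx h1
      refine ⟨p.2, ?_, ?_⟩
      · have h2 : (p.1, p.2) ∈ A := by simpa using hp
        rwa [hpx] at h2
      · have := congrArg Prod.snd hpe
        simpa [hpx, hG] using this
    · rintro ⟨b, hb, hbe⟩
      exact ⟨(x, b), hb, by simp [hG, hbe]⟩
  have fiber_empty : ∀ x' ∉ T '' S, Prod.mk x' ⁻¹' (G '' A) = ∅ := by
    intro x' hx'
    ext y'
    simp only [mem_preimage, mem_empty_iff_false, iff_false]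
    rintro ⟨p, hp, hpe⟩
    exact hx' ⟨p.1, (hAS hp).1, congrArg Prod.fst hpe⟩
  have fiber_empty' : ∀ x ∉ S, Prod.mk x ⁻¹' A = ∅ := by
    intro x hx
    ext y
    simp only [mem_preimage, mem_empty_iff_false, iff_false]
    intro h
    exact hx (hAS h).1
  calc volume (G '' A)
      = ∫⁻ x', volume (Prod.mk x' ⁻¹' (G '' A)) := by
        rw [hvol, Measure.prod_apply hGA]
    _ = ∫⁻ x' in T '' S, volume (Prod.mk x' ⁻¹' (G '' A)) := by
        rw [← lintegral_add_compl (fun x' => volume (Prod.mk x' ⁻¹' (G '' A))) hTS]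
        have : ∫⁻ x' in (T '' S)ᶜ, volume (Prod.mk x' ⁻¹' (G '' A)) = 0 := by
          rw [setLIntegral_congr_fun (f := fun x' => volume (Prod.mk x' ⁻¹' (G '' A)))
            (g := fun _ => 0) hTS.compl
            ((fun x' hx' => by
              simp only [fiber_empty x' hx', measure_empty]))]
          simp
        rw [this, add_zero]
    _ = ∫⁻ x in S, ENNReal.ofReal |(T' x).det|
          * volume (Prod.mk (T x) ⁻¹' (G '' A)) := by
        exact lintegral_image_eq_lintegral_abs_det_fderiv_mul volume hSm hTd hTi _
    _ = ∫⁻ x in S, volume (Prod.mk x ⁻¹' A) := by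
        refine setLIntegral_congr_fun hSm (fun x hx => ?_)
        rw [fiber_eq x hx]
        have himg : (fun b => W x b + f x) '' (Prod.mk x ⁻¹' A)
            = (fun y => y + f x) '' ((W x) '' (Prod.mk x ⁻¹' A)) := by
          rw [← Set.image_comp]; rfl
        have hcoe : ⇑(W x) = ⇑((W x).toLinearMap) := rfl
        rw [himg, Set.image_add_right, measure_preimage_add_right, hcoe,
          Measure.addHaar_image_linearMap, ← mul_assoc, hdet x hx, one_mul]
    _ = ∫⁻ x, volume (Prod.mk x ⁻¹' A) := by
        conv_rhs => rw [← lintegral_add_compl (fun x => volume (Prod.mk x ⁻¹' A)) hSm]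
        have : ∫⁻ x in Sᶜ, volume (Prod.mk x ⁻¹' A) = 0 := by
          rw [setLIntegral_congr_fun (f := fun x => volume (Prod.mk x ⁻¹' A))
            (g := fun _ => 0) hSm.compl
            ((fun x hx => by
              simp only [fiber_empty' x hx, measure_empty]))]
          simp
        rw [this, add_zero]
    _ = volume A := by rw [hvol, Measure.prod_apply hA]

theorem my_branch_meas' (S : Set Eu) (hSm : MeasurableSet S)
    (T : Eu → Eu) (T' : Eu → Eu →L[ℝ] Eu)
    (hTd : ∀ x ∈ S, HasFDerivWithinAt T (T' x) S x)
    (hTi : Set.InjOn T S)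
    (W : Eu → Eu →L[ℝ] Eu) (f : Eu → Eu)
    (hdet : ∀ x ∈ S,
      ENNReal.ofReal |(T' x).det| * ENNReal.ofReal |LinearMap.det (W x).toLinearMap| = 1)
    (hWi : ∀ x ∈ S, Function.Injective (W x))
    (hGc : ContinuousOn (fun p : Eu × Eu => (T p.1, W p.1 p.2 + f p.1)) (S ×ˢ (univ : Set Eu)))
    (A : Set (Eu × Eu)) (hAS : A ⊆ S ×ˢ (univ : Set Eu)) :
    volume ((fun p : Eu × Eu => (T p.1, W p.1 p.2 + f p.1)) '' A) = volume A := by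
  set G : Eu × Eu → Eu × Eu := fun p => (T p.1, W p.1 p.2 + f p.1) with hG
  have hD : MeasurableSet (S ×ˢ (univ : Set Eu)) := hSm.prod MeasurableSet.univ
  have hinj : Set.InjOn G (S ×ˢ (univ : Set Eu)) := my_branch_inj S T hTi W f hWi
  have key : ∀ A' : Set (Eu × Eu), MeasurableSet A' → A' ⊆ S ×ˢ (univ : Set Eu) →
      volume (G '' A') = volume A' := by
    intro A' hA' hA'S
    exact my_branch_meas S hSm T T' hTd hTi W f hdet A' hA' hA'S
      (hA'.image_of_continuousOn_injOn (hGc.mono hA'S) (hinj.mono hA'S))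
  apply le_antisymm
  · set B := toMeasurable volume A ∩ (S ×ˢ (univ : Set Eu)) with hB
    have hBm : MeasurableSet B := (measurableSet_toMeasurable _ _).inter hD
    have hAB : A ⊆ B := subset_inter (subset_toMeasurable _ _) hAS
    calc volume (G '' A) ≤ volume (G '' B) := measure_mono (image_mono hAB)
      _ = volume B := key B hBm inter_subset_right
      _ ≤ volume (toMeasurable volume A) := measure_mono inter_subset_left
      _ = volume A := measure_toMeasurable A
  · set Cs := toMeasurable volume (G '' A) with hCs
    set A' := (S ×ˢ (univ : Set Eu)) ∩ G ⁻¹' Cs with hA'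
    have hA'm : MeasurableSet A' :=
      my_meas_inter_preimage hD hGc (measurableSet_toMeasurable _ _)
    have hAA' : A ⊆ A' := fun p hp =>
      ⟨hAS hp, subset_toMeasurable _ _ (mem_image_of_mem G hp)⟩
    calc volume A ≤ volume A' := measure_mono hAA'
      _ = volume (G '' A') := (key A' hA'm inter_subset_left).symm
      _ ≤ volume Cs := measure_mono (image_subset_iff.2 inter_subset_right)
      _ = volume (G '' A) := measure_toMeasurable _

end Aux





/-- Under the standard-form hypotheses (i')–(iii'), let `K` be the
compact subset of `I × ℝ^d` with `π(K) = I` and `closure(T̃(K)) = K`, where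
`T̃(K) = ⋃_α T̃_α(K_α)` and `K_α = K ∩ (I_α × ℝ^d)`.  Assume `m(K) > 0` and
`m(K ∖ T̃(K)) = 0`.  Then the sets `T̃_α(K_α)` are pairwise disjoint up to Lebesgue-null
sets, and `T̃` restricted to `K` is, up to null sets, a measure-preserving bijection of
`K`: there are full-measure subsets `K', K'' ⊆ K` and a map `F` agreeing on `K'` with
some branch `T̃_α` at each point, mapping `K'` bijectively onto `K''`, and preserving
Lebesgue measure. -/
theorem stmt_8 {d : ℕ} {𝒜 : Type*} [Countable 𝒜]
    (I : Set (EuclideanSpace ℝ (Fin d)))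
    (hIne : I.Nonempty) (hIcp : IsCompact I) (hIreg : I = closure (interior I))
    (Iα : 𝒜 → Set (EuclideanSpace ℝ (Fin d)))
    (hsub : ∀ α, Iα α ⊆ I) (hcp : ∀ α, IsCompact (Iα α))
    (hreg : ∀ α, Iα α = closure (interior (Iα α)))
    (hcover : ⋃ α, Iα α = I)
    (hnull : ∀ α β, α ≠ β → volume (Iα α ∩ Iα β) = 0)
    (T : 𝒜 → EuclideanSpace ℝ (Fin d) → EuclideanSpace ℝ (Fin d))
    (T' : 𝒜 → EuclideanSpace ℝ (Fin d) →
      (EuclideanSpace ℝ (Fin d) →L[ℝ] EuclideanSpace ℝ (Fin d)))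
    (hTinj : ∀ α, Set.InjOn (T α) (Iα α))
    (hTim : ∀ α, T α '' Iα α ⊆ I)
    (hTderiv : ∀ α, ∀ x ∈ Iα α, HasFDerivWithinAt (T α) (T' α x) (Iα α) x)
    (hT'cont : ∀ α, ContinuousOn (T' α) (Iα α))
    (C : ℝ) (hC : 1 < C)
    (hexp : ∀ α, ∀ x ∈ Iα α, ∀ v : EuclideanSpace ℝ (Fin d), C * ‖v‖ ≤ ‖T' α x v‖)
    (hTcover : ⋃ α, T α '' Iα α = I)
    (W : 𝒜 → EuclideanSpace ℝ (Fin d) →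
      (EuclideanSpace ℝ (Fin d) →L[ℝ] EuclideanSpace ℝ (Fin d)))
    (hW : ∀ α, ∀ x ∈ Iα α, ∀ y : EuclideanSpace ℝ (Fin d),
      ContinuousLinearMap.adjoint (T' α x) (W α x y) = y ∧
      W α x (ContinuousLinearMap.adjoint (T' α x) y) = y)
    (hWcont : ∀ α, ContinuousOn (W α) (Iα α))
    (f : 𝒜 → EuclideanSpace ℝ (Fin d) → EuclideanSpace ℝ (Fin d))
    (hfcont : ∀ α, ContinuousOn (f α) (Iα α))
    (B : ℝ) (hfbd : ∀ α, ∀ x ∈ Iα α, ‖f α x‖ ≤ B)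
    -- the invariant compact set K
    (K : Set (EuclideanSpace ℝ (Fin d) × EuclideanSpace ℝ (Fin d)))
    (hKcp : IsCompact K) (hKπ : Prod.fst '' K = I)
    (hKfix : closure (⋃ α : 𝒜,
      (fun p : EuclideanSpace ℝ (Fin d) × EuclideanSpace ℝ (Fin d) =>
        (T α p.1, W α p.1 p.2 + f α p.1)) ''
      (K ∩ (Iα α ×ˢ (Set.univ : Set (EuclideanSpace ℝ (Fin d)))))) = K)
    (hKpos : 0 < volume K)
    (hKnull : volume (K \ ⋃ α : 𝒜,
      (fun p : EuclideanSpace ℝ (Fin d) × EuclideanSpace ℝ (Fin d) =>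
        (T α p.1, W α p.1 p.2 + f α p.1)) ''
      (K ∩ (Iα α ×ˢ (Set.univ : Set (EuclideanSpace ℝ (Fin d)))))) = 0) :
    -- the images of the pieces are pairwise disjoint in measure
    (∀ α β, α ≠ β →
      volume
        (((fun p : EuclideanSpace ℝ (Fin d) × EuclideanSpace ℝ (Fin d) =>
            (T α p.1, W α p.1 p.2 + f α p.1)) ''
          (K ∩ (Iα α ×ˢ (Set.univ : Set (EuclideanSpace ℝ (Fin d)))))) ∩
         ((fun p : EuclideanSpace ℝ (Fin d) × EuclideanSpace ℝ (Fin d) =>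
            (T β p.1, W β p.1 p.2 + f β p.1)) ''
          (K ∩ (Iα β ×ˢ (Set.univ : Set (EuclideanSpace ℝ (Fin d))))))) = 0) ∧
    -- T̃ is, up to null sets, a Lebesgue-measure-preserving bijection of K
    ∃ K' K'' : Set (EuclideanSpace ℝ (Fin d) × EuclideanSpace ℝ (Fin d)),
      K' ⊆ K ∧ K'' ⊆ K ∧ volume (K \ K') = 0 ∧ volume (K \ K'') = 0 ∧
      ∃ F : EuclideanSpace ℝ (Fin d) × EuclideanSpace ℝ (Fin d) →
            EuclideanSpace ℝ (Fin d) × EuclideanSpace ℝ (Fin d),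
        (∀ p ∈ K', ∃ α, p.1 ∈ Iα α ∧ F p = (T α p.1, W α p.1 p.2 + f α p.1)) ∧
        Set.BijOn F K' K'' ∧
        (∀ A : Set (EuclideanSpace ℝ (Fin d) × EuclideanSpace ℝ (Fin d)),
          A ⊆ K' → MeasurableSet A → volume (F '' A) = volume A) := by
  
  classical
  obtain ⟨ι, hι⟩ := exists_injective_nat 𝒜
  set G : 𝒜 → ((EuclideanSpace ℝ (Fin d)) × (EuclideanSpace ℝ (Fin d))) → ((EuclideanSpace ℝ (Fin d)) × (EuclideanSpace ℝ (Fin d))) :=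
    fun α p => (T α p.1, W α p.1 p.2 + f α p.1) with hGdef
  set D : 𝒜 → Set ((EuclideanSpace ℝ (Fin d)) × (EuclideanSpace ℝ (Fin d))) := fun α => (Iα α) ×ˢ (Set.univ : Set (EuclideanSpace ℝ (Fin d))) with hDdef
  set Ek : 𝒜 → Set ((EuclideanSpace ℝ (Fin d)) × (EuclideanSpace ℝ (Fin d))) := fun α => K ∩ D α with hEkdef
  set Sk : 𝒜 → Set ((EuclideanSpace ℝ (Fin d)) × (EuclideanSpace ℝ (Fin d))) := fun α => G α '' Ek α with hSkdef
  have hIαm : ∀ α, MeasurableSet (Iα α) := fun α => (hcp α).measurableSet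
  have hTc : ∀ α, ContinuousOn (T α) (Iα α) := fun α x hx => (hTderiv α x hx).continuousWithinAt
  have hGc : ∀ α, ContinuousOn (G α) (D α) := by
    intro α
    have h1 : ContinuousOn (fun p : (EuclideanSpace ℝ (Fin d)) × (EuclideanSpace ℝ (Fin d)) => T α p.1) (D α) :=
      (hTc α).comp continuousOn_fst (fun p hp => hp.1)
    have h2 : ContinuousOn (fun p : (EuclideanSpace ℝ (Fin d)) × (EuclideanSpace ℝ (Fin d)) => W α p.1) (D α) :=
      (hWcont α).comp continuousOn_fst (fun p hp => hp.1)
    have h3 : ContinuousOn (fun p : (EuclideanSpace ℝ (Fin d)) × (EuclideanSpace ℝ (Fin d)) => W α p.1 p.2) (D α) :=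
      h2.clm_apply continuous_snd.continuousOn
    have h4 : ContinuousOn (fun p : (EuclideanSpace ℝ (Fin d)) × (EuclideanSpace ℝ (Fin d)) => f α p.1) (D α) :=
      (hfcont α).comp continuousOn_fst (fun p hp => hp.1)
    exact h1.prodMk (h3.add h4)
  have hdet : ∀ α, ∀ x ∈ Iα α, ENNReal.ofReal |(T' α x).det|
      * ENNReal.ofReal |LinearMap.det ((W α x).toLinearMap)| = 1 :=
    fun α x hx => (my_adj_det_fact (T' α x) (W α x) (fun y => (hW α x hx y).1)).1
  have hWinj : ∀ α, ∀ x ∈ Iα α, Function.Injective (W α x) :=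
    fun α x hx => (my_adj_det_fact (T' α x) (W α x) (fun y => (hW α x hx y).1)).2
  have hbm : ∀ α (A : Set ((EuclideanSpace ℝ (Fin d)) × (EuclideanSpace ℝ (Fin d)))), A ⊆ D α → volume (G α '' A) = volume A := fun α A hA =>
    my_branch_meas' (Iα α) (hIαm α) (T α) (T' α) (hTderiv α) (hTinj α) (W α) (f α)
      (hdet α) (hWinj α) (hGc α) A hA
  have hDm : ∀ α, MeasurableSet (D α) := fun α => (hIαm α).prod MeasurableSet.univ
  have hEksub : ∀ α, Ek α ⊆ D α := fun α => Set.inter_subset_right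
  have hEkcp : ∀ α, IsCompact (Ek α) := fun α =>
    hKcp.inter_right ((hcp α).isClosed.prod isClosed_univ)
  have hSkcp : ∀ α, IsCompact (Sk α) := fun α =>
    (hEkcp α).image_of_continuousOn ((hGc α).mono (hEksub α))
  have hSkm : ∀ α, MeasurableSet (Sk α) := fun α => (hSkcp α).measurableSet
  have hKfst : ∀ p ∈ K, p.1 ∈ I := by
    intro p hp
    rw [← hKπ]
    exact ⟨p, hp, rfl⟩
  have hEkU : (⋃ α, Ek α) = K := by
    apply Set.Subset.antisymm
    · exact Set.iUnion_subset fun α => Set.inter_subset_left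
    · intro p hp
      have h1 : p.1 ∈ I := hKfst p hp
      rw [← hcover] at h1
      obtain ⟨α, hα⟩ := Set.mem_iUnion.1 h1
      exact Set.mem_iUnion.2 ⟨α, hp, hα, Set.mem_univ _⟩
  have hDnull : ∀ α β, α ≠ β → volume (D α ∩ D β) = 0 := by
    intro α β hne
    have he : D α ∩ D β = (Iα α ∩ Iα β) ×ˢ (Set.univ : Set (EuclideanSpace ℝ (Fin d))) := by
      rw [hDdef]
      simp [Set.prod_inter_prod]
    rw [he, show (volume : Measure ((EuclideanSpace ℝ (Fin d)) × (EuclideanSpace ℝ (Fin d)))) = (volume : Measure (EuclideanSpace ℝ (Fin d))).prod volume from rfl,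
      Measure.prod_prod, hnull α β hne, zero_mul]
  have hμK : volume K < ⊤ := hKcp.measure_lt_top
  have hSkEk : ∀ α, volume (Sk α) = volume (Ek α) := fun α => hbm α (Ek α) (hEksub α)
  have hsumE : ∑' α, volume (Ek α) = volume K := by
    apply le_antisymm
    · calc ∑' α, volume (Ek α) ≤ volume (⋃ α, Ek α) :=
            my_tsum_meas_le volume D Ek hEksub hDm hDnull
        _ = volume K := by rw [hEkU]
    · calc volume K = volume (⋃ α, Ek α) := by rw [hEkU]
        _ ≤ ∑' α, volume (Ek α) := measure_iUnion_le _
  have hSkU : (⋃ α, Sk α) ⊆ K := by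
    rw [← hKfix]
    exact subset_closure
  have hKdiffnull : volume (K \ ⋃ α, Sk α) = 0 := hKnull
  have hμSkU : volume (⋃ α, Sk α) = volume K := by
    apply le_antisymm (measure_mono hSkU)
    calc volume K ≤ volume ((⋃ α, Sk α) ∪ (K \ ⋃ α, Sk α)) := by
          refine measure_mono (fun p hp => ?_)
          by_cases h : p ∈ ⋃ α, Sk α
          exacts [Or.inl h, Or.inr ⟨hp, h⟩]
      _ ≤ volume (⋃ α, Sk α) + volume (K \ ⋃ α, Sk α) := measure_union_le _ _
      _ = volume (⋃ α, Sk α) := by rw [hKdiffnull, add_zero]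
  have hsumS : ∑' α, volume (Sk α) = volume K := (tsum_congr hSkEk).trans hsumE
  have hpart1 : ∀ α β, α ≠ β → volume (Sk α ∩ Sk β) = 0 := by
    intro α β hne
    set R := ∑' γ, if γ = β then 0 else volume (Sk γ) with hR
    have hsplit : volume K = volume (Sk β) + R := by
      rw [← hsumS, ENNReal.tsum_eq_add_tsum_ite β]
    have hRfin : R ≠ ⊤ := by
      intro h
      rw [h, add_top] at hsplit
      exact hμK.ne hsplit
    have hcov2 : (⋃ γ, Sk γ) ⊆ (Sk β \ Sk α)
        ∪ ⋃ γ, (if γ = β then (∅ : Set ((EuclideanSpace ℝ (Fin d)) × (EuclideanSpace ℝ (Fin d)))) else Sk γ) := by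
      intro z hz
      obtain ⟨γ, hγ⟩ := Set.mem_iUnion.1 hz
      by_cases hγβ : γ = β
      · subst hγβ
        by_cases hzα : z ∈ Sk α
        · refine Or.inr (Set.mem_iUnion.2 ⟨α, ?_⟩)
          rw [if_neg hne]
          exact hzα
        · exact Or.inl ⟨hγ, hzα⟩
      · refine Or.inr (Set.mem_iUnion.2 ⟨γ, ?_⟩)
        rw [if_neg hγβ]
        exact hγ
    have h1 : volume K ≤ volume (Sk β \ Sk α) + R := by
      calc volume K = volume (⋃ γ, Sk γ) := hμSkU.symm
        _ ≤ volume ((Sk β \ Sk α) ∪ ⋃ γ, (if γ = β then (∅ : Set ((EuclideanSpace ℝ (Fin d)) × (EuclideanSpace ℝ (Fin d)))) else Sk γ)) :=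
            measure_mono hcov2
        _ ≤ volume (Sk β \ Sk α)
            + volume (⋃ γ, (if γ = β then (∅ : Set ((EuclideanSpace ℝ (Fin d)) × (EuclideanSpace ℝ (Fin d)))) else Sk γ)) :=
            measure_union_le _ _
        _ ≤ volume (Sk β \ Sk α)
            + ∑' γ, volume (if γ = β then (∅ : Set ((EuclideanSpace ℝ (Fin d)) × (EuclideanSpace ℝ (Fin d)))) else Sk γ) :=
            add_le_add_right (measure_iUnion_le _) _
        _ = volume (Sk β \ Sk α) + R := by
            congr 1
            refine tsum_congr fun γ => ?_
            split_ifs <;> simp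
    have h2 : volume (Sk β) ≤ volume (Sk β \ Sk α) := by
      have h3 : volume (Sk β) + R ≤ volume (Sk β \ Sk α) + R := hsplit ▸ h1
      exact (ENNReal.add_le_add_iff_right hRfin).1 h3
    have h4 : volume (Sk β ∩ Sk α) + volume (Sk β \ Sk α) = volume (Sk β) :=
      measure_inter_add_diff _ (hSkm α)
    have hfin : volume (Sk β \ Sk α) ≠ ⊤ :=
      (lt_of_le_of_lt (measure_mono Set.diff_subset) (hSkcp β).measure_lt_top).ne
    have h5 : volume (Sk β ∩ Sk α) = 0 := by
      have h6 : volume (Sk β ∩ Sk α) + volume (Sk β \ Sk α) ≤ 0 + volume (Sk β \ Sk α) := by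
        rw [zero_add, h4]
        exact h2
      exact le_antisymm ((ENNReal.add_le_add_iff_right hfin).1 h6) zero_le
    rw [Set.inter_comm] at h5
    exact h5
  set Psel : (EuclideanSpace ℝ (Fin d)) → 𝒜 → Prop := fun x α => x ∈ Iα α ∧ ∀ β, x ∈ Iα β → ι α ≤ ι β with hPseldef
  have hselex : ∀ x, x ∈ I → ∃ α, Psel x α := by
    intro x hx
    rw [← hcover] at hx
    obtain ⟨α₀, hα₀⟩ := Set.mem_iUnion.1 hx
    have hexn : ∃ n, ∃ α, ι α = n ∧ x ∈ Iα α := ⟨ι α₀, α₀, rfl, hα₀⟩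
    obtain ⟨α, hαn, hxα⟩ := Nat.find_spec hexn
    refine ⟨α, hxα, fun β hβ => ?_⟩
    rw [hαn]
    exact Nat.find_min' hexn ⟨β, rfl, hβ⟩
  have hPuniq : ∀ x α β, Psel x α → Psel x β → α = β := fun x α β hα hβ =>
    hι (le_antisymm (hα.2 β hβ.1) (hβ.2 α hα.1))
  set F : (EuclideanSpace ℝ (Fin d)) × (EuclideanSpace ℝ (Fin d)) → (EuclideanSpace ℝ (Fin d)) × (EuclideanSpace ℝ (Fin d)) :=
    fun p => if h : ∃ α, Psel p.1 α then G h.choose p else p with hFdef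
  have hFP : ∀ (p : (EuclideanSpace ℝ (Fin d)) × (EuclideanSpace ℝ (Fin d))) (α : 𝒜), Psel p.1 α → F p = G α p := by
    intro p α h
    have hex : ∃ γ, Psel p.1 γ := ⟨α, h⟩
    rw [hFdef]
    simp only
    rw [dif_pos hex, hPuniq p.1 hex.choose α hex.choose_spec h]
  set P : 𝒜 → Set ((EuclideanSpace ℝ (Fin d)) × (EuclideanSpace ℝ (Fin d))) := fun α => {p ∈ K | Psel p.1 α} with hPdef
  have hPsubK : ∀ α, P α ⊆ K := fun α p hp => hp.1
  have hPsubE : ∀ α, P α ⊆ Ek α := fun α p hp => ⟨hp.1, hp.2.1, Set.mem_univ _⟩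
  have hPm : ∀ α, MeasurableSet (P α) := by
    intro α
    have he : P α = (K ∩ Prod.fst ⁻¹' (Iα α)) ∩
        ⋂ β : {β : 𝒜 // ι β < ι α}, (Prod.fst ⁻¹' (Iα β.1))ᶜ := by
      ext p
      simp only [hPdef, Set.mem_sep_iff, Set.mem_inter_iff, Set.mem_preimage, Set.mem_iInter,
        Set.mem_compl_iff, hPseldef]
      constructor
      · rintro ⟨hK, hIA, hmin⟩
        refine ⟨⟨hK, hIA⟩, ?_⟩
        rintro ⟨β, hβ⟩ hmem
        exact absurd (hmin β hmem) (by omega)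
      · rintro ⟨⟨hK, hIA⟩, hmin⟩
        refine ⟨hK, hIA, fun β hβ => ?_⟩
        by_contra hlt
        exact hmin ⟨β, by omega⟩ hβ
    rw [he]
    exact ((hKcp.measurableSet.inter ((hIαm α).preimage measurable_fst)).inter
      (MeasurableSet.iInter fun β => ((hIαm β.1).preimage measurable_fst).compl))
  have hKP : K = ⋃ α, P α := by
    apply Set.Subset.antisymm
    · intro p hp
      obtain ⟨α, hα⟩ := hselex p.1 (hKfst p hp)
      exact Set.mem_iUnion.2 ⟨α, hp, hα⟩
    · exact Set.iUnion_subset hPsubK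
  have hPae : ∀ α β, α ≠ β → volume (P α ∩ P β) = 0 := by
    intro α β hne
    have he : P α ∩ P β = ∅ := by
      ext p
      simp only [Set.mem_inter_iff, Set.mem_empty_iff_false, iff_false]
      rintro ⟨hpα, hpβ⟩
      exact hne (hPuniq p.1 α β hpα.2 hpβ.2)
    rw [he, measure_empty]
  have hEPnull : ∀ α, volume (Ek α \ P α) = 0 := by
    intro α
    refine measure_mono_null (fun p hp => ?_)
      (measure_iUnion_null
        (s := fun γ : {γ : 𝒜 // γ ≠ α} => (Iα α ∩ Iα γ.1) ×ˢ (Set.univ : Set (EuclideanSpace ℝ (Fin d))))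
        fun γ => ?_)
    · obtain ⟨⟨hpK, hpIα, -⟩, hnp⟩ := hp
      obtain ⟨γ, hγ⟩ := hselex p.1 (hKfst p hpK)
      have hγα : γ ≠ α := fun h => hnp ⟨hpK, h ▸ hγ⟩
      exact Set.mem_iUnion.2 ⟨⟨γ, hγα⟩, ⟨hpIα, hγ.1⟩, Set.mem_univ _⟩
    · rw [show (volume : Measure ((EuclideanSpace ℝ (Fin d)) × (EuclideanSpace ℝ (Fin d)))) = (volume : Measure (EuclideanSpace ℝ (Fin d))).prod volume from rfl,
        Measure.prod_prod, hnull α γ.1 (Ne.symm γ.2), zero_mul]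
  have hSPnull : ∀ α, volume (Sk α \ G α '' P α) = 0 := by
    intro α
    refine measure_mono_null (Set.subset_image_diff (G α) (Ek α) (P α)) ?_
    rw [hbm α (Ek α \ P α) (fun p hp => hEksub α hp.1)]
    exact hEPnull α
  set Z := (K \ ⋃ α, Sk α) ∪ ((⋃ q : {q : 𝒜 × 𝒜 // q.1 ≠ q.2}, (Sk q.1.1 ∩ Sk q.1.2))
    ∪ ⋃ α, (Sk α \ G α '' P α)) with hZdef
  have hZ0 : volume Z = 0 :=
    measure_union_null hKdiffnull (measure_union_null
      (measure_iUnion_null fun q => hpart1 q.1.1 q.1.2 q.2)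
      (measure_iUnion_null hSPnull))
  have hGPK : ∀ α (p : (EuclideanSpace ℝ (Fin d)) × (EuclideanSpace ℝ (Fin d))), p ∈ P α → G α p ∈ Sk α :=
    fun α p hp => Set.mem_image_of_mem _ (hPsubE α hp)
  constructor
  · exact fun α β hne => hpart1 α β hne
  set K2 := K \ Z with hK2
  set K1 := {p ∈ K | F p ∈ K2} with hK1
  refine ⟨K1, K2, fun p hp => hp.1, Set.diff_subset, ?_, ?_, F, ?_, ?_, ?_⟩
  · -- volume (K \ K1) = 0
    refine measure_mono_null (fun p hp => ?_)
      (measure_iUnion_null (s := fun α => P α ∩ (G α ⁻¹' Z)) fun α => ?_)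
    · obtain ⟨hpK, hnp⟩ := hp
      obtain ⟨α, hα⟩ := hselex p.1 (hKfst p hpK)
      have hpP : p ∈ P α := ⟨hpK, hα⟩
      have hF : F p = G α p := hFP p α hα
      have hGK : G α p ∈ K := hSkU (Set.mem_iUnion.2 ⟨α, hGPK α p hpP⟩)
      have hFZ : G α p ∈ Z := by
        by_contra h
        exact hnp ⟨hpK, by rw [hF]; exact ⟨hGK, h⟩⟩
      exact Set.mem_iUnion.2 ⟨α, hpP, hFZ⟩
    · have hsub : P α ∩ G α ⁻¹' Z ⊆ D α := fun p hp => hEksub α (hPsubE α hp.1)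
      rw [← hbm α _ hsub]
      exact measure_mono_null (Set.image_subset_iff.2 Set.inter_subset_right) hZ0
  · -- volume (K \ K2) = 0
    refine measure_mono_null (fun p hp => ?_) hZ0
    by_contra h
    exact hp.2 ⟨hp.1, h⟩
  · -- agreement with branches
    intro p hp
    obtain ⟨α, hα⟩ := hselex p.1 (hKfst p hp.1)
    exact ⟨α, hα.1, hFP p α hα⟩
  · -- BijOn
    refine ⟨fun p hp => hp.2, ?_, ?_⟩
    · intro p hp q hq he
      obtain ⟨αp, hαp⟩ := hselex p.1 (hKfst p hp.1)
      obtain ⟨αq, hαq⟩ := hselex q.1 (hKfst q hq.1)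
      have hFp : F p = G αp p := hFP p αp hαp
      have hFq : F q = G αq q := hFP q αq hαq
      have heq : αp = αq := by
        by_contra hne
        have h1 : F p ∈ Sk αp := by
          rw [hFp]
          exact hGPK αp p ⟨hp.1, hαp⟩
        have h2 : F p ∈ Sk αq := by
          rw [he, hFq]
          exact hGPK αq q ⟨hq.1, hαq⟩
        have h3 : F p ∈ Z := Or.inr (Or.inl (Set.mem_iUnion.2 ⟨⟨(αp, αq), hne⟩, h1, h2⟩))
        exact hp.2.2 h3
      subst heq
      have hinj := my_branch_inj (Iα αp) (T αp) (hTinj αp) (W αp) (f αp) (hWinj αp)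
      have hpd : p ∈ (Iα αp) ×ˢ (Set.univ : Set (EuclideanSpace ℝ (Fin d))) := hEksub αp (hPsubE αp ⟨hp.1, hαp⟩)
      have hqd : q ∈ (Iα αp) ×ˢ (Set.univ : Set (EuclideanSpace ℝ (Fin d))) := hEksub αp (hPsubE αp ⟨hq.1, hαq⟩)
      have hGeq : G αp p = G αp q := by
        rw [← hFp, ← hFq]
        exact he
      exact hinj hpd hqd hGeq
    · intro z hz
      obtain ⟨hzK, hzZ⟩ := hz
      have hzU : z ∈ ⋃ α, Sk α := by
        by_contra h
        exact hzZ (Or.inl ⟨hzK, h⟩)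
      obtain ⟨α, hα⟩ := Set.mem_iUnion.1 hzU
      have hzG : z ∈ G α '' P α := by
        by_contra h
        exact hzZ (Or.inr (Or.inr (Set.mem_iUnion.2 ⟨α, hα, h⟩)))
      obtain ⟨p, hpP, hpe⟩ := hzG
      have hF : F p = G α p := hFP p α hpP.2
      refine ⟨p, ⟨hpP.1, ?_⟩, ?_⟩
      · rw [hF, hpe]
        exact ⟨hzK, hzZ⟩
      · rw [hF, hpe]
  · -- measure preservation
    intro A hA hAm
    have hAcov : A ⊆ ⋃ α, P α := fun p hp => hKP ▸ (hA hp).1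
    have hAP : (⋃ α, (A ∩ P α)) = A := by
      apply Set.Subset.antisymm (Set.iUnion_subset fun α => Set.inter_subset_left)
      intro p hp
      obtain ⟨α, hα⟩ := Set.mem_iUnion.1 (hAcov hp)
      exact Set.mem_iUnion.2 ⟨α, hp, hα⟩
    have hFA : F '' A = ⋃ α, G α '' (A ∩ P α) := by
      apply Set.Subset.antisymm
      · rintro q ⟨p, hp, rfl⟩
        obtain ⟨α, hα⟩ := Set.mem_iUnion.1 (hAcov hp)
        exact Set.mem_iUnion.2 ⟨α, ⟨p, ⟨hp, hα⟩, (hFP p α hα.2).symm⟩⟩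
      · refine Set.iUnion_subset fun α => ?_
        rintro q ⟨p, hp, rfl⟩
        exact ⟨p, hp.1, hFP p α hp.2.2⟩
    have hsub2 : ∀ α, A ∩ P α ⊆ D α :=
      fun α => Set.inter_subset_right.trans ((hPsubE α).trans (hEksub α))
    apply le_antisymm
    · calc volume (F '' A) = volume (⋃ α, G α '' (A ∩ P α)) := by rw [hFA]
        _ ≤ ∑' α, volume (G α '' (A ∩ P α)) := measure_iUnion_le _
        _ = ∑' α, volume (A ∩ P α) := tsum_congr fun α => hbm α _ (hsub2 α)
        _ ≤ volume (⋃ α, (A ∩ P α)) :=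
            my_tsum_meas_le volume P (fun α => A ∩ P α)
              (fun α => Set.inter_subset_right) hPm hPae
        _ = volume A := by rw [hAP]
    · calc volume A = volume (⋃ α, (A ∩ P α)) := by rw [hAP]
        _ ≤ ∑' α, volume (A ∩ P α) := measure_iUnion_le _
        _ = ∑' α, volume (G α '' (A ∩ P α)) := tsum_congr fun α => (hbm α _ (hsub2 α)).symm
        _ ≤ volume (⋃ α, G α '' (A ∩ P α)) :=
            my_tsum_meas_le volume Sk (fun α => G α '' (A ∩ P α))
              (fun α => Set.image_mono (Set.inter_subset_right.trans (hPsubE α)))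
              hSkm hpart1
        _ = volume (F '' A) := by rw [hFA]
end

section
/- Under the standard-form hypotheses (i')–(iii'), let K be a compact subset of I × ℝ^d. Suppose (x_n, y_n)_{n∈ℤ} and (x_n, y'_n)_{n∈ℤ} are two bi-infinite sequences of points of K with the same first coordinates, and (α_n)_{n∈ℤ} is a sequence of indices with x_n ∈ I_{α_n} such that for every n ∈ ℤ, T̃_{α_n}(x_n, y_n) = (x_{n+1}, y_{n+1}) and T̃_{α_n}(x_n, y'_n) = (x_{n+1}, y'_{n+1}). Then y_n = y'_n for all n ∈ ℤ. (Proof idea: each fiber map y ↦ ((T'_α(x))^T)^{-1}·y + f_α(x) contracts distances by at least the factor 1/C, so ‖y_n − y'_n‖ ≥ C‖y_{n+1} − y'_{n+1}‖; if y_0 ≠ y'_0 then ‖y_n − y'_n‖ → ∞ as n → −∞, contradicting compactness of K.) -/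
open MeasureTheory RealInnerProductSpace


lemma adj_lower {E : Type*} [NormedAddCommGroup E] [InnerProductSpace ℝ E]
    [FiniteDimensional ℝ E] (A : E →L[ℝ] E) (C : ℝ) (hC : 0 < C)
    (h : ∀ v, C * ‖v‖ ≤ ‖A v‖) :
    ∀ u, C * ‖u‖ ≤ ‖ContinuousLinearMap.adjoint A u‖ := by
  have hinj : Function.Injective (A : E →ₗ[ℝ] E) := by
    rw [← LinearMap.ker_eq_bot, LinearMap.ker_eq_bot']
    intro v hv
    have := h v
    rw [show A v = 0 from hv] at this
    simp at this
    by_contra hne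
    have : 0 < ‖v‖ := norm_pos_iff.mpr hne
    nlinarith
  have hsurj : Function.Surjective (A : E →ₗ[ℝ] E) :=
    (LinearMap.injective_iff_surjective).mp hinj
  intro u
  by_cases hu : u = 0
  · simp [hu]
  obtain ⟨v, hv⟩ := hsurj u
  have h1 : ‖u‖ ^ 2 = ⟪ContinuousLinearMap.adjoint A u, v⟫ := by
    rw [ContinuousLinearMap.adjoint_inner_left]
    rw [show A v = u from hv, real_inner_self_eq_norm_sq]
  have h2 : ⟪ContinuousLinearMap.adjoint A u, v⟫ ≤ ‖ContinuousLinearMap.adjoint A u‖ * ‖v‖ :=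
    real_inner_le_norm _ _
  have h3 : C * ‖v‖ ≤ ‖u‖ := by
    have := h v
    rwa [show A v = u from hv] at this
  have hupos : 0 < ‖u‖ := norm_pos_iff.mpr hu
  have hvnn : 0 ≤ ‖v‖ := norm_nonneg _
  nlinarith [norm_nonneg (ContinuousLinearMap.adjoint A u)]

theorem stmt_9' {d : ℕ}
    (Iα : Set (EuclideanSpace ℝ (Fin d)))
    (C : ℝ) (hC : 1 < C)
    (K : Set (EuclideanSpace ℝ (Fin d) × EuclideanSpace ℝ (Fin d)))
    (hKcp : IsCompact K)
    (y y' : ℤ → EuclideanSpace ℝ (Fin d))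
    (hxy : ∀ n : ℤ, ∃ xn, (xn, y n) ∈ K ∧ (xn, y' n) ∈ K)
    (hstep : ∀ n : ℤ, C * ‖y (n+1) - y' (n+1)‖ ≤ ‖y n - y' n‖) :
    ∀ n : ℤ, y n = y' n := by
  -- bound on K
  obtain ⟨M, hM⟩ := hKcp.isBounded.subset_closedBall 0
  have hbd : ∀ k : ℤ, ‖y k - y' k‖ ≤ 2 * M := by
    intro k
    obtain ⟨xn, h1, h2⟩ := hxy k
    have b1 : ‖y k‖ ≤ M := by
      have := hM h1
      simp [Metric.closedBall, Prod.norm_def, dist_eq_norm] at this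
      exact this.2
    have b2 : ‖y' k‖ ≤ M := by
      have := hM h2
      simp [Metric.closedBall, Prod.norm_def, dist_eq_norm] at this
      exact this.2
    calc ‖y k - y' k‖ ≤ ‖y k‖ + ‖y' k‖ := norm_sub_le _ _
      _ ≤ 2 * M := by linarith
  intro n
  by_contra hne
  have hd : 0 < ‖y n - y' n‖ := by
    rw [norm_pos_iff, sub_ne_zero]; exact hne
  have key : ∀ m : ℕ, C ^ m * ‖y n - y' n‖ ≤ ‖y (n - m) - y' (n - m)‖ := by
    intro m
    induction m with
    | zero => simp
    | succ m ih =>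
      have hs := hstep (n - (m + 1 : ℕ))
      have hidx : (n - (m + 1 : ℕ)) + 1 = n - m := by push_cast; ring
      rw [hidx] at hs
      calc C ^ (m + 1) * ‖y n - y' n‖ = C * (C ^ m * ‖y n - y' n‖) := by ring
        _ ≤ C * ‖y (n - m) - y' (n - m)‖ := by
            apply mul_le_mul_of_nonneg_left ih (by linarith)
        _ ≤ _ := hs
  obtain ⟨m, hm⟩ := pow_unbounded_of_one_lt ((2 * M) / ‖y n - y' n‖) hC
  have := (key m).trans (hbd _)
  rw [div_lt_iff₀ hd] at hm
  nlinarith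

/-- Under the standard-form hypotheses (i')–(iii'), let `K` be a compact
subset of `I × ℝ^d`.  If `(x_n, y_n)` and `(x_n, y'_n)` are two bi-infinite sequences of
points of `K` with the same first coordinates, following the same branches, i.e.
`T̃_{α_n}(x_n, y_n) = (x_{n+1}, y_{n+1})` and `T̃_{α_n}(x_n, y'_n) = (x_{n+1}, y'_{n+1})`
for all `n ∈ ℤ`, where `T̃_α(x, y) = (T_α x, ((T'_α(x))ᵀ)⁻¹ y + f_α x)`, then
`y_n = y'_n` for all `n ∈ ℤ`. -/
theorem stmt_9 {d : ℕ} {𝒜 : Type*} [Countable 𝒜]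
    (I : Set (EuclideanSpace ℝ (Fin d)))
    (hIne : I.Nonempty) (hIcp : IsCompact I) (hIreg : I = closure (interior I))
    (Iα : 𝒜 → Set (EuclideanSpace ℝ (Fin d)))
    (hsub : ∀ α, Iα α ⊆ I) (hcp : ∀ α, IsCompact (Iα α))
    (hreg : ∀ α, Iα α = closure (interior (Iα α)))
    (hcover : ⋃ α, Iα α = I)
    (hnull : ∀ α β, α ≠ β → volume (Iα α ∩ Iα β) = 0)
    (T : 𝒜 → EuclideanSpace ℝ (Fin d) → EuclideanSpace ℝ (Fin d))
    (T' : 𝒜 → EuclideanSpace ℝ (Fin d) →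
      (EuclideanSpace ℝ (Fin d) →L[ℝ] EuclideanSpace ℝ (Fin d)))
    (hTinj : ∀ α, Set.InjOn (T α) (Iα α))
    (hTim : ∀ α, T α '' Iα α ⊆ I)
    (hTderiv : ∀ α, ∀ x ∈ Iα α, HasFDerivWithinAt (T α) (T' α x) (Iα α) x)
    (hT'cont : ∀ α, ContinuousOn (T' α) (Iα α))
    (C : ℝ) (hC : 1 < C)
    (hexp : ∀ α, ∀ x ∈ Iα α, ∀ v : EuclideanSpace ℝ (Fin d), C * ‖v‖ ≤ ‖T' α x v‖)
    (hTcover : ⋃ α, T α '' Iα α = I)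
    (W : 𝒜 → EuclideanSpace ℝ (Fin d) →
      (EuclideanSpace ℝ (Fin d) →L[ℝ] EuclideanSpace ℝ (Fin d)))
    (hW : ∀ α, ∀ x ∈ Iα α, ∀ y : EuclideanSpace ℝ (Fin d),
      ContinuousLinearMap.adjoint (T' α x) (W α x y) = y ∧
      W α x (ContinuousLinearMap.adjoint (T' α x) y) = y)
    (hWcont : ∀ α, ContinuousOn (W α) (Iα α))
    (f : 𝒜 → EuclideanSpace ℝ (Fin d) → EuclideanSpace ℝ (Fin d))
    (hfcont : ∀ α, ContinuousOn (f α) (Iα α))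
    (B : ℝ) (hfbd : ∀ α, ∀ x ∈ Iα α, ‖f α x‖ ≤ B)
    (K : Set (EuclideanSpace ℝ (Fin d) × EuclideanSpace ℝ (Fin d)))
    (hKcp : IsCompact K)
    (x y y' : ℤ → EuclideanSpace ℝ (Fin d)) (αseq : ℤ → 𝒜)
    (hxy : ∀ n : ℤ, (x n, y n) ∈ K) (hxy' : ∀ n : ℤ, (x n, y' n) ∈ K)
    (hxα : ∀ n : ℤ, x n ∈ Iα (αseq n))
    (hrec : ∀ n : ℤ,
      (T (αseq n) (x n), W (αseq n) (x n) (y n) + f (αseq n) (x n))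
        = (x (n + 1), y (n + 1)))
    (hrec' : ∀ n : ℤ,
      (T (αseq n) (x n), W (αseq n) (x n) (y' n) + f (αseq n) (x n))
        = (x (n + 1), y' (n + 1))) :
    ∀ n : ℤ, y n = y' n := by
  have hstep : ∀ n : ℤ, C * ‖y (n+1) - y' (n+1)‖ ≤ ‖y n - y' n‖ := by
    intro n
    have e1 : y (n+1) = W (αseq n) (x n) (y n) + f (αseq n) (x n) :=
      (congrArg Prod.snd (hrec n)).symm
    have e2 : y' (n+1) = W (αseq n) (x n) (y' n) + f (αseq n) (x n) :=
      (congrArg Prod.snd (hrec' n)).symm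
    have hdiff : y (n+1) - y' (n+1) = W (αseq n) (x n) (y n - y' n) := by
      rw [e1, e2, map_sub]; abel
    have hadj : ContinuousLinearMap.adjoint (T' (αseq n) (x n)) (y (n+1) - y' (n+1))
        = y n - y' n := by
      rw [hdiff]; exact (hW _ _ (hxα n) _).1
    calc C * ‖y (n+1) - y' (n+1)‖
        ≤ ‖ContinuousLinearMap.adjoint (T' (αseq n) (x n)) (y (n+1) - y' (n+1))‖ :=
          adj_lower _ C (by linarith) (hexp _ _ (hxα n)) _
      _ = ‖y n - y' n‖ := by rw [hadj]
  exact stmt_9' Set.univ C hC K hKcp y y' (fun n => ⟨x n, hxy n, hxy' n⟩) hstep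
end

section
/- Let a, b, c, d ∈ ℝ with ad − bc = 1, and define T̂(x, v) := ((ax+b)/(cx+d), (dv−c)/(a−bv)) on the open set V := {(x, v) ∈ ℝ² : cx + d ≠ 0, a − bv ≠ 0, 1 + xv ≠ 0}. Then T̂ preserves the measure with density 1/(1+xv)²: writing (x', v') = T̂(x, v), at every point of V where 1 + x'v' ≠ 0 one has |det DT̂(x, v)| · 1/(1+x'v')² = 1/(1+xv)². In particular, for any open set U ⊆ V on which T̂ is injective and 1 + x'v' ≠ 0, ∫_{T̂(U)} dx dv/(1+xv)² = ∫_U dx dv/(1+xv)². -/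
open MeasureTheory

/-- The map `T̂(x, v) = (M·x, (Mᵀ)⁻¹·v) = ((ax+b)/(cx+d), (dv−c)/(a−bv))` associated to
the matrix `M = (a b; c d)`. -/
noncomputable def mobiusHat (a b c d : ℝ) : ℝ × ℝ → ℝ × ℝ := fun p =>
  ((a * p.1 + b) / (c * p.1 + d), (d * p.2 - c) / (a - b * p.2))

noncomputable def mobiusD (a b c d : ℝ) (p : ℝ × ℝ) : ℝ × ℝ →L[ℝ] ℝ × ℝ :=
  ((1 : ℝ →L[ℝ] ℝ).smulRight (1 / (c * p.1 + d) ^ 2)).prodMap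
    ((1 : ℝ →L[ℝ] ℝ).smulRight (1 / (a - b * p.2) ^ 2))

lemma mobiusD_det (a b c d : ℝ) (p : ℝ × ℝ) :
    LinearMap.det (mobiusD a b c d p).toLinearMap
      = (1 / (c * p.1 + d) ^ 2) * (1 / (a - b * p.2) ^ 2) := by
  rw [← LinearMap.det_toMatrix (Module.Basis.finTwoProd ℝ), Matrix.det_fin_two]
  simp [mobiusD, LinearMap.toMatrix_apply, Module.Basis.coe_finTwoProd_repr, Module.Basis.finTwoProd_zero,
    Module.Basis.finTwoProd_one]

lemma mobiusHat_hasFDerivAt (a b c d : ℝ) (hdet : a * d - b * c = 1) (p : ℝ × ℝ)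
    (h1 : c * p.1 + d ≠ 0) (h2 : a - b * p.2 ≠ 0) :
    HasFDerivAt (mobiusHat a b c d) (mobiusD a b c d p) p := by
  have hf : HasDerivAt (fun x : ℝ => (a * x + b) / (c * x + d)) (1 / (c * p.1 + d) ^ 2) p.1 := by
    have := (((hasDerivAt_id p.1).const_mul a).add_const b).div
      (((hasDerivAt_id p.1).const_mul c).add_const d) h1
    have hnum : a * 1 * (c * p.1 + d) - (a * p.1 + b) * (c * 1) = 1 := by
      linear_combination hdet
    simp only [id_eq] at this
    rwa [hnum] at this
  have hg : HasDerivAt (fun v : ℝ => (d * v - c) / (a - b * v)) (1 / (a - b * p.2) ^ 2) p.2 := by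
    have := (((hasDerivAt_id p.2).const_mul d).sub_const c).div
      ((hasDerivAt_const p.2 a).sub ((hasDerivAt_id p.2).const_mul b)) h2
    have hnum : d * 1 * (a - b * p.2) - (d * p.2 - c) * (0 - b * 1) = 1 := by
      linear_combination hdet
    simp only [id_eq, Pi.sub_apply] at this
    rwa [hnum] at this
  exact hf.hasFDerivAt.prodMap p hg.hasFDerivAt

lemma mobius_key (a b c d x v : ℝ) (hdet : a * d - b * c = 1) (h1 : c * x + d ≠ 0)
    (h2 : a - b * v ≠ 0) :
    1 + (a * x + b) / (c * x + d) * ((d * v - c) / (a - b * v))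
      = (1 + x * v) / ((c * x + d) * (a - b * v)) := by
  rw [div_mul_div_comm, one_add_div (mul_ne_zero h1 h2)]
  congr 1
  linear_combination (1 + x * v) * hdet

lemma mobius_density (a b c d : ℝ) (hdet : a * d - b * c = 1) (p : ℝ × ℝ)
    (h1 : c * p.1 + d ≠ 0) (h2 : a - b * p.2 ≠ 0) (h3 : 1 + p.1 * p.2 ≠ 0) :
    |LinearMap.det (mobiusD a b c d p).toLinearMap| *
      (1 / (1 + (mobiusHat a b c d p).1 * (mobiusHat a b c d p).2) ^ 2)
      = 1 / (1 + p.1 * p.2) ^ 2 := by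
  rw [mobiusD_det]
  have habs : |(1 / (c * p.1 + d) ^ 2) * (1 / (a - b * p.2) ^ 2)|
      = (1 / (c * p.1 + d) ^ 2) * (1 / (a - b * p.2) ^ 2) := by
    apply abs_of_pos; positivity
  rw [habs, show (mobiusHat a b c d p).1 = (a * p.1 + b) / (c * p.1 + d) from rfl,
    show (mobiusHat a b c d p).2 = (d * p.2 - c) / (a - b * p.2) from rfl,
    mobius_key a b c d p.1 p.2 hdet h1 h2]
  rw [div_pow, one_div_div]
  field_simp

/-- Let `a, b, c, d ∈ ℝ` with `ad − bc = 1` and let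
`T̂(x, v) = ((ax+b)/(cx+d), (dv−c)/(a−bv))` on
`V = {(x, v) | cx + d ≠ 0, a − bv ≠ 0, 1 + xv ≠ 0}`.  Then `T̂` preserves the measure
with density `1/(1+xv)²`: writing `(x', v') = T̂(x, v)`, at every point of `V` where
`1 + x'v' ≠ 0` one has `|det DT̂(x, v)| · 1/(1+x'v')² = 1/(1+xv)²`; and for any open
`U ⊆ V` on which `T̂` is injective and `1 + x'v' ≠ 0`,
`∫_{T̂(U)} dx dv/(1+xv)² = ∫_U dx dv/(1+xv)²`. -/
theorem stmt_12 (a b c d : ℝ) (hdet : a * d - b * c = 1) :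
    (∀ p : ℝ × ℝ, c * p.1 + d ≠ 0 → a - b * p.2 ≠ 0 → 1 + p.1 * p.2 ≠ 0 →
      1 + (mobiusHat a b c d p).1 * (mobiusHat a b c d p).2 ≠ 0 →
      ∃ D : ℝ × ℝ →L[ℝ] ℝ × ℝ, HasFDerivAt (mobiusHat a b c d) D p ∧
        |LinearMap.det D.toLinearMap| *
          (1 / (1 + (mobiusHat a b c d p).1 * (mobiusHat a b c d p).2) ^ 2) =
          1 / (1 + p.1 * p.2) ^ 2) ∧
    (∀ U : Set (ℝ × ℝ), IsOpen U →
      (∀ p ∈ U, c * p.1 + d ≠ 0 ∧ a - b * p.2 ≠ 0 ∧ 1 + p.1 * p.2 ≠ 0 ∧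
        1 + (mobiusHat a b c d p).1 * (mobiusHat a b c d p).2 ≠ 0) →
      Set.InjOn (mobiusHat a b c d) U →
      ∫ p in mobiusHat a b c d '' U, 1 / (1 + p.1 * p.2) ^ 2 =
        ∫ p in U, 1 / (1 + p.1 * p.2) ^ 2) := by
  constructor
  · intro p h1 h2 h3 _
    exact ⟨mobiusD a b c d p, mobiusHat_hasFDerivAt a b c d hdet p h1 h2,
      mobius_density a b c d hdet p h1 h2 h3⟩
  · intro U hU hV hinj
    rw [integral_image_eq_integral_abs_det_fderiv_smul volume hU.measurableSet
      (fun p hp => (mobiusHat_hasFDerivAt a b c d hdet p (hV p hp).1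
        (hV p hp).2.1).hasFDerivWithinAt) hinj]
    apply setIntegral_congr_fun hU.measurableSet
    intro p hp
    have := mobius_density a b c d hdet p (hV p hp).1 (hV p hp).2.1 (hV p hp).2.2.1
    simpa [ContinuousLinearMap.det, smul_eq_mul] using this
end

section
/- Let T̃(x, y) := (1/x − ⌊1/x⌋, x − x²y), defined for x ∈ (0, 1) and y ∈ ℝ. For every integer n ≥ 1, the image under T̃ of the set {(x, y) : 1/(n+1) < x < 1/n, 0 ≤ y ≤ 1/(1+x)} equals the set {(x', y') : 0 < x' < 1, 1/(n+1+x') ≤ y' ≤ 1/(n+x')}. Consequently T̃ maps the set K := {(x, y) : 0 < x < 1, 0 ≤ y ≤ 1/(1+x)} (minus the lines x = 1/n) into K, and the images over n ≥ 1 cover K up to a Lebesgue-null set. -/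
open MeasureTheory

/-- The natural-extension map `T̃(x, y) = (1/x − ⌊1/x⌋, x − x²y)` of the Gauss map. -/
noncomputable def gaussExt : ℝ × ℝ → ℝ × ℝ := fun p =>
  (1 / p.1 - (⌊1 / p.1⌋ : ℝ), p.1 - p.1 ^ 2 * p.2)

/-- The strip `{(x, y) | 1/(n+1) < x < 1/n, 0 ≤ y ≤ 1/(1+x)}`. -/
def gaussStrip (n : ℕ) : Set (ℝ × ℝ) :=
  {p : ℝ × ℝ | 1 / ((n : ℝ) + 1) < p.1 ∧ p.1 < 1 / (n : ℝ) ∧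
    0 ≤ p.2 ∧ p.2 ≤ 1 / (1 + p.1)}

/-- The domain `K = {(x, y) | 0 < x < 1, 0 ≤ y ≤ 1/(1+x)}` of the natural extension of
the Gauss map. -/
def gaussDomain : Set (ℝ × ℝ) :=
  {p : ℝ × ℝ | 0 < p.1 ∧ p.1 < 1 ∧ 0 ≤ p.2 ∧ p.2 ≤ 1 / (1 + p.1)}

lemma gauss_image_eq (n : ℕ) (hn : 1 ≤ n) :
    gaussExt '' gaussStrip n =
      {p : ℝ × ℝ | 0 < p.1 ∧ p.1 < 1 ∧
        1 / ((n : ℝ) + 1 + p.1) ≤ p.2 ∧ p.2 ≤ 1 / ((n : ℝ) + p.1)} := by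
  have hN : (1:ℝ) ≤ (n:ℝ) := by exact_mod_cast hn
  ext p
  constructor
  · rintro ⟨⟨x, y⟩, ⟨hx1, hx2, hy0, hy1⟩, rfl⟩
    have hx0 : 0 < x := lt_trans (by positivity) hx1
    have hxne : x ≠ 0 := ne_of_gt hx0
    have h1x : (0:ℝ) < 1 + x := by linarith
    have hinv1 : (n:ℝ) < 1 / x := by
      rw [lt_div_iff₀ hx0]
      have := (lt_div_iff₀ (show (0:ℝ) < n by linarith)).mp hx2
      linarith
    have hinv2 : 1 / x < (n:ℝ) + 1 := by
      rw [div_lt_iff₀ hx0]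
      have := (div_lt_iff₀ (show (0:ℝ) < (n:ℝ)+1 by linarith)).mp hx1
      linarith
    have hfl : (⌊1 / x⌋ : ℝ) = (n : ℝ) := by
      have h : ⌊1 / x⌋ = (n : ℤ) := by
        rw [Int.floor_eq_iff]
        constructor
        · push_cast; linarith
        · push_cast; linarith
      exact_mod_cast h
    have hy1' : y * (1 + x) ≤ 1 := (le_div_iff₀ h1x).mp hy1
    simp only [gaussExt, Set.mem_setOf_eq, hfl]
    refine ⟨by linarith, by linarith, ?_, ?_⟩
    · have e1 : 1 / ((n:ℝ) + 1 + (1 / x - (n:ℝ))) = x / (1 + x) := by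
        rw [show (n:ℝ) + 1 + (1 / x - (n:ℝ)) = 1/x + 1 by ring, div_add_one hxne,
          one_div_div]
      rw [e1, div_le_iff₀ h1x]
      nlinarith [mul_nonneg (mul_self_nonneg x) (sub_nonneg.2 hy1')]
    · have e2 : 1 / ((n:ℝ) + (1 / x - (n:ℝ))) = x := by
        rw [show (n:ℝ) + (1 / x - (n:ℝ)) = 1/x by ring, one_div_one_div]
      rw [e2]
      nlinarith [mul_nonneg (sq_nonneg x) hy0]
  · obtain ⟨u, v⟩ := p
    rintro ⟨hu0, hu1, hv1, hv2⟩
    simp only [Set.mem_setOf_eq] at hu0 hu1 hv1 hv2 ⊢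
    set d : ℝ := (n:ℝ) + u with hd
    have hd0 : (0:ℝ) < d := by simp only [hd]; linarith
    have hdn : d ≠ 0 := ne_of_gt hd0
    have hv2' : v * d ≤ 1 := (le_div_iff₀ hd0).mp hv2
    have hv1' : 1 ≤ v * (d + 1) := by
      have h := hv1
      rw [show (n:ℝ) + 1 + u = d + 1 by rw [hd]; ring] at h
      have := (div_le_iff₀ (by linarith : (0:ℝ) < d + 1)).mp h
      linarith
    refine ⟨(1/d, d - v*d^2), ⟨?_, ?_, ?_, ?_⟩, ?_⟩
    · rw [div_lt_div_iff₀ (by linarith : (0:ℝ) < (n:ℝ)+1) hd0]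
      simp only [hd]; nlinarith
    · rw [div_lt_div_iff₀ hd0 (by linarith : (0:ℝ) < (n:ℝ))]
      simp only [hd]; nlinarith
    · show (0:ℝ) ≤ d - v*d^2
      nlinarith [mul_nonneg hd0.le (sub_nonneg.2 hv2')]
    · show d - v*d^2 ≤ 1/(1 + 1/d)
      rw [show (1:ℝ) + 1/d = (1+d)/d by rw [add_comm, div_add_one hdn], one_div_div,
        le_div_iff₀ (by linarith : (0:ℝ) < 1 + d)]
      nlinarith [mul_nonneg (sq_nonneg d) (by linarith : (0:ℝ) ≤ v*(d+1) - 1)]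
    · have hflr : (⌊d⌋ : ℝ) = (n : ℝ) := by
        have h : ⌊d⌋ = (n:ℤ) := by
          rw [Int.floor_eq_iff]
          constructor
          · push_cast; simp only [hd]; linarith
          · push_cast; simp only [hd]; linarith
        exact_mod_cast h
      simp only [gaussExt, one_div_one_div, hflr, Prod.mk.injEq]
      constructor
      · simp only [hd]; ring
      · field_simp
        ring

/-- For the Gauss natural-extension map
`T̃(x, y) = (1/x − ⌊1/x⌋, x − x²y)` and every integer `n ≥ 1`, the image of the strip
`{(x, y) | 1/(n+1) < x < 1/n, 0 ≤ y ≤ 1/(1+x)}` equals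
`{(x', y') | 0 < x' < 1, 1/(n+1+x') ≤ y' ≤ 1/(n+x')}`.  Consequently, `T̃` maps
`K = {(x, y) | 0 < x < 1, 0 ≤ y ≤ 1/(1+x)}` minus the lines `x = 1/n` into `K`, and the
images over `n ≥ 1` cover `K` up to a Lebesgue-null set. -/
theorem stmt_13 :
    (∀ n : ℕ, 1 ≤ n →
      gaussExt '' gaussStrip n =
        {p : ℝ × ℝ | 0 < p.1 ∧ p.1 < 1 ∧
          1 / ((n : ℝ) + 1 + p.1) ≤ p.2 ∧ p.2 ≤ 1 / ((n : ℝ) + p.1)}) ∧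
    gaussExt '' {p ∈ gaussDomain | ∀ n : ℕ, 1 ≤ n → p.1 ≠ 1 / (n : ℝ)} ⊆ gaussDomain ∧
    volume (gaussDomain \ ⋃ n : ℕ, ⋃ _ : 1 ≤ n, gaussExt '' gaussStrip n) = 0 := by
  refine ⟨fun n hn => gauss_image_eq n hn, ?_, ?_⟩
  · rintro q ⟨⟨x, y⟩, ⟨⟨hx0, hx1, hy0, hy1⟩, hne⟩, rfl⟩
    have hix : 1 < 1/x := by rw [lt_div_iff₀ hx0]; linarith
    have hfl1 : (1:ℤ) ≤ ⌊1/x⌋ := Int.le_floor.2 (by exact_mod_cast hix.le)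
    set n : ℕ := ⌊1/x⌋.toNat with hndef
    have hn1 : 1 ≤ n := by omega
    have hcast : ((n:ℕ):ℝ) = (⌊1/x⌋ : ℝ) := by
      have h : ((n:ℕ):ℤ) = ⌊1/x⌋ := Int.toNat_of_nonneg (by omega)
      exact_mod_cast congrArg (fun z : ℤ => (z:ℝ)) h
    have hN : (1:ℝ) ≤ (n:ℝ) := by exact_mod_cast hn1
    have hle : ((n:ℕ):ℝ) ≤ 1/x := by rw [hcast]; exact Int.floor_le _
    have hltadd : 1/x < (n:ℝ) + 1 := by rw [hcast]; exact Int.lt_floor_add_one _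
    have hne' : ((n:ℝ)) ≠ 1/x := by
      intro h
      exact hne n hn1 (by rw [h, one_div_one_div])
    have hlt : (n:ℝ) < 1/x := lt_of_le_of_ne hle hne'
    have hmem : (x, y) ∈ gaussStrip n := by
      refine ⟨?_, ?_, hy0, hy1⟩
      · show 1 / ((n:ℝ)+1) < x
        rw [div_lt_iff₀ (by linarith : (0:ℝ) < (n:ℝ)+1)]
        have := (div_lt_iff₀ hx0).mp hltadd
        nlinarith
      · show x < 1 / (n:ℝ)
        rw [lt_div_iff₀ (by linarith : (0:ℝ) < (n:ℝ))]
        have := (lt_div_iff₀ hx0).mp hlt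
        nlinarith
    have himg := Set.mem_image_of_mem gaussExt hmem
    rw [gauss_image_eq n hn1] at himg
    obtain ⟨hu0, hu1, hv1, hv2⟩ := himg
    refine ⟨hu0, hu1, le_trans (by positivity) hv1, ?_⟩
    refine le_trans hv2 ?_
    apply one_div_le_one_div_of_le (by linarith : (0:ℝ) < 1 + (gaussExt (x,y)).1)
    linarith
  · apply measure_mono_null
      (t := Set.Ioo (0:ℝ) 1 ×ˢ ({0} : Set ℝ))
    · rintro ⟨x, y⟩ ⟨⟨hx0, hx1, hy0, hy1⟩, hnot⟩
      refine ⟨⟨hx0, hx1⟩, ?_⟩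
      simp only [Set.mem_singleton_iff]
      by_contra hy
      have hy0' : 0 < y := lt_of_le_of_ne hy0 (Ne.symm hy)
      have h1x : (0:ℝ) < 1 + x := by linarith
      have ht0 : (1:ℝ) + x ≤ 1/y := by
        rw [le_div_iff₀ hy0']
        have := (le_div_iff₀ h1x).mp hy1
        linarith
      have ht : (1:ℝ) ≤ 1/y - x := by linarith
      set n : ℕ := ⌊1/y - x⌋₊ with hndef
      have hn1 : 1 ≤ n := Nat.le_floor (by exact_mod_cast ht)
      have hN : (1:ℝ) ≤ (n:ℝ) := by exact_mod_cast hn1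
      have hnt : (n:ℝ) ≤ 1/y - x := Nat.floor_le (by linarith)
      have htn : 1/y - x < (n:ℝ) + 1 := Nat.lt_floor_add_one _
      refine hnot (Set.mem_iUnion.2 ⟨n, Set.mem_iUnion.2 ⟨hn1, ?_⟩⟩)
      rw [gauss_image_eq n hn1]
      refine ⟨hx0, hx1, ?_, ?_⟩
      · show 1 / ((n:ℝ) + 1 + x) ≤ y
        rw [div_le_iff₀ (by linarith : (0:ℝ) < (n:ℝ)+1+x)]
        have := (div_lt_iff₀ hy0').mp (show 1/y < (n:ℝ)+1+x by linarith)
        nlinarith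
      · show y ≤ 1 / ((n:ℝ) + x)
        rw [le_div_iff₀ (by linarith : (0:ℝ) < (n:ℝ)+x)]
        have := (le_div_iff₀ hy0').mp (show (n:ℝ)+x ≤ 1/y by linarith)
        nlinarith
    · rw [show (volume : Measure (ℝ × ℝ)) = (volume : Measure ℝ).prod volume from rfl,
        Measure.prod_prod, Real.volume_singleton, mul_zero]
end

section
/- Let T : [0, 1] → [0, 1] be the Gauss map, T(x) := 1/x − ⌊1/x⌋ for x ∈ (0, 1] and T(0) := 0. Then the Borel measure μ on [0, 1] with density x ↦ 1/((1+x)·log 2) with respect to Lebesgue measure is a T-invariant probability measure: μ([0,1]) = 1 and the pushforward of μ under T equals μ. -/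
open MeasureTheory

/-- The Gauss continued fraction map `T(x) = 1/x − ⌊1/x⌋` for `x ≠ 0`, with `T(0) = 0`. -/
noncomputable def gaussMap (x : ℝ) : ℝ :=
  if x = 0 then 0 else 1 / x - (⌊1 / x⌋ : ℝ)

/-- The Gauss measure on `[0, 1]`: density `1/((1+x)·log 2)` w.r.t. Lebesgue measure. -/
noncomputable def gaussMeasure : Measure ℝ :=
  (volume.restrict (Set.Icc (0 : ℝ) 1)).withDensity
    (fun x => ENNReal.ofReal (1 / ((1 + x) * Real.log 2)))

lemma measurable_gaussMap : Measurable gaussMap := by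
  unfold gaussMap
  refine Measurable.ite (measurableSet_eq) measurable_const ?_
  exact (measurable_const.div measurable_id).sub
    (measurable_from_top.comp (Int.measurable_floor.comp (measurable_const.div measurable_id)))

lemma gaussMeasure_inter (s : Set ℝ) (hs : MeasurableSet s) :
    gaussMeasure s = gaussMeasure (s ∩ Set.Icc 0 1) := by
  rw [gaussMeasure, withDensity_apply _ hs, withDensity_apply _ (hs.inter measurableSet_Icc),
    Measure.restrict_restrict hs, Measure.restrict_restrict (hs.inter measurableSet_Icc),
    Set.inter_assoc, Set.inter_self]

lemma gaussMeasure_Icc {a b : ℝ} (h0 : 0 ≤ a) (hab : a ≤ b) (hb : b ≤ 1) :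
    gaussMeasure (Set.Icc a b) =
      ENNReal.ofReal ((Real.log (1 + b) - Real.log (1 + a)) / Real.log 2) := by
  have hmeas : MeasurableSet (Set.Icc a b) := measurableSet_Icc
  rw [gaussMeasure, withDensity_apply _ hmeas, Measure.restrict_restrict hmeas,
    Set.inter_eq_left.2 (Set.Icc_subset_Icc h0 hb)]
  have hcont : ContinuousOn (fun x : ℝ => 1 / ((1 + x) * Real.log 2)) (Set.Icc a b) := by
    apply ContinuousOn.div continuousOn_const
    · exact ((continuousOn_const.add continuousOn_id).mul continuousOn_const)
    · intro x hx
      have hx0 : (0:ℝ) < 1 + x := by have := hx.1; linarith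
      have h2 : Real.log 2 ≠ 0 := by
        have := Real.log_pos (by norm_num : (1:ℝ) < 2); linarith
      positivity
  have hInt : IntegrableOn (fun x : ℝ => 1 / ((1 + x) * Real.log 2)) (Set.Icc a b) volume :=
    hcont.integrableOn_Icc
  have hnn : 0 ≤ᵐ[volume.restrict (Set.Icc a b)]
      (fun x : ℝ => 1 / ((1 + x) * Real.log 2)) := by
    filter_upwards [ae_restrict_mem measurableSet_Icc] with x hx
    have hx0 : (0:ℝ) < 1 + x := by have := hx.1; linarith
    have h2 : (0:ℝ) < Real.log 2 := Real.log_pos (by norm_num)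
    positivity
  rw [← ofReal_integral_eq_lintegral_ofReal hInt hnn]
  congr 1
  rw [MeasureTheory.integral_Icc_eq_integral_Ioc, ← intervalIntegral.integral_of_le hab]
  have hderiv : ∀ x ∈ Set.uIcc a b,
      HasDerivAt (fun x => Real.log (1 + x) / Real.log 2)
        (1 / ((1 + x) * Real.log 2)) x := by
    intro x hx
    rw [Set.uIcc_of_le hab] at hx
    have hx0 : (0:ℝ) < 1 + x := by have := hx.1; linarith
    have h1 : HasDerivAt (fun x : ℝ => 1 + x) 1 x := by
      simpa using (hasDerivAt_id x).const_add 1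
    have h2 := (h1.log hx0.ne').div_const (Real.log 2)
    simpa [one_div, mul_comm, mul_inv, div_eq_mul_inv] using h2
  have hci : IntervalIntegrable (fun x : ℝ => 1 / ((1 + x) * Real.log 2)) volume a b :=
    ((Set.uIcc_of_le hab).symm ▸ hcont).intervalIntegrable
  rw [intervalIntegral.integral_eq_sub_of_hasDerivAt hderiv hci]
  ring

lemma telescope_hasSum {t : ℝ} (ht : 0 ≤ t) :
    HasSum (fun n : ℕ =>
        Real.log (1 + 1 / ((n:ℝ) + 1)) - Real.log (1 + 1 / ((n:ℝ) + 1 + t)))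
      (Real.log (1 + t)) := by
  set h : ℕ → ℝ := fun n => Real.log ((n:ℝ) + 1 + t) - Real.log ((n:ℝ) + 1) with hh
  have hpos : ∀ n : ℕ, (0:ℝ) < (n:ℝ) + 1 := fun n => by positivity
  have hpost : ∀ n : ℕ, (0:ℝ) < (n:ℝ) + 1 + t := fun n => by positivity
  have hterm : ∀ n : ℕ,
      Real.log (1 + 1 / ((n:ℝ) + 1)) - Real.log (1 + 1 / ((n:ℝ) + 1 + t))
        = h n - h (n + 1) := by
    intro n
    have e1 : (1:ℝ) + 1 / ((n:ℝ) + 1) = ((n:ℝ) + 1 + 1) / ((n:ℝ) + 1) := by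
      field_simp
    have e2 : (1:ℝ) + 1 / ((n:ℝ) + 1 + t) = ((n:ℝ) + 1 + t + 1) / ((n:ℝ) + 1 + t) := by
      field_simp
    rw [e1, e2, Real.log_div (by positivity) (hpos n).ne',
      Real.log_div (by positivity) (hpost n).ne']
    simp only [hh]
    push_cast
    ring_nf
  have hnn : ∀ n : ℕ, 0 ≤ Real.log (1 + 1 / ((n:ℝ) + 1)) - Real.log (1 + 1 / ((n:ℝ) + 1 + t)) := by
    intro n
    have : (1:ℝ) + 1 / ((n:ℝ) + 1 + t) ≤ 1 + 1 / ((n:ℝ) + 1) := by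
      have := one_div_le_one_div_of_le (hpos n) (by linarith : (n:ℝ) + 1 ≤ (n:ℝ) + 1 + t)
      linarith
    have hp : (0:ℝ) < 1 + 1 / ((n:ℝ) + 1 + t) := by positivity
    exact sub_nonneg.2 (Real.log_le_log hp this)
  rw [hasSum_iff_tendsto_nat_of_nonneg hnn]
  have hsum : ∀ N, ∑ i ∈ Finset.range N,
      (Real.log (1 + 1 / ((i:ℝ) + 1)) - Real.log (1 + 1 / ((i:ℝ) + 1 + t))) = h 0 - h N := by
    intro N
    rw [← Finset.sum_range_sub' h N]
    exact Finset.sum_congr rfl fun i _ => hterm i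
  simp only [hsum]
  have h0 : h 0 = Real.log (1 + t) := by simp [hh, add_comm]
  have hlim : Filter.Tendsto h Filter.atTop (nhds 0) := by
    have : ∀ n : ℕ, h n = Real.log (1 + t / ((n:ℝ) + 1)) := by
      intro n
      have : (1:ℝ) + t / ((n:ℝ) + 1) = ((n:ℝ) + 1 + t) / ((n:ℝ) + 1) := by field_simp
      rw [this, Real.log_div (hpost n).ne' (hpos n).ne']
    rw [funext this]
    have h1 : Filter.Tendsto (fun n : ℕ => t / ((n:ℝ) + 1)) Filter.atTop (nhds 0) := by
      have := tendsto_one_div_add_atTop_nhds_zero_nat (𝕜 := ℝ)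
      have h2 : Filter.Tendsto (fun n : ℕ => t * (1 / ((n:ℝ) + 1))) Filter.atTop (nhds (t * 0)) :=
        this.const_mul t
      simpa [div_eq_mul_inv, one_div, mul_comm] using h2
    have h2 : Filter.Tendsto (fun n : ℕ => (1:ℝ) + t / ((n:ℝ) + 1)) Filter.atTop (nhds 1) := by
      simpa using h1.const_add 1
    have h3 := (Real.continuousAt_log (by norm_num : (1:ℝ) ≠ 0)).tendsto.comp h2
    simpa [Function.comp_def] using h3
  have hfin := hlim.const_sub (h 0)
  rw [sub_zero] at hfin
  rw [← h0]
  exact hfin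

lemma gaussMap_nonneg (x : ℝ) : 0 ≤ gaussMap x := by
  unfold gaussMap
  split
  · exact le_refl 0
  · exact sub_nonneg.2 (Int.floor_le _)

lemma gaussMap_lt_one (x : ℝ) : gaussMap x < 1 := by
  unfold gaussMap
  split
  · norm_num
  · have := Int.sub_one_lt_floor (1 / x)
    linarith

lemma preimage_Iic {t : ℝ} (ht0 : 0 ≤ t) (ht1 : t < 1) :
    gaussMap ⁻¹' Set.Iic t ∩ Set.Icc 0 1
      = insert (0:ℝ) (⋃ n : ℕ, Set.Icc (1/((n:ℝ)+1+t)) (1/((n:ℝ)+1))) := by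
  ext x
  simp only [Set.mem_inter_iff, Set.mem_preimage, Set.mem_Iic, Set.mem_Icc,
    Set.mem_insert_iff, Set.mem_iUnion]
  constructor
  · rintro ⟨hTx, hx0, hx1⟩
    rcases eq_or_lt_of_le hx0 with h0 | h0
    · exact Or.inl h0.symm
    right
    have hx0' : x ≠ 0 := ne_of_gt h0
    rw [gaussMap, if_neg hx0'] at hTx
    have hinvpos : (0:ℝ) < 1 / x := by positivity
    have hinv1 : (1:ℝ) ≤ 1 / x := by rw [le_div_iff₀ h0]; simpa using hx1
    have hk1 : 1 ≤ ⌊1/x⌋ := Int.le_floor.2 (by exact_mod_cast hinv1)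
    refine ⟨(⌊1/x⌋ - 1).toNat, ?_, ?_⟩
    · have hcast : (((⌊1/x⌋ - 1).toNat : ℕ) : ℝ) + 1 + t = (⌊1/x⌋ : ℝ) + t := by
        have h1 : ((⌊1/x⌋ - 1).toNat : ℤ) = ⌊1/x⌋ - 1 := Int.toNat_of_nonneg (by omega)
        have h2 : (((⌊1/x⌋ - 1).toNat : ℕ) : ℝ) = ((⌊1/x⌋ : ℝ) - 1) := by
          exact_mod_cast congrArg (fun z : ℤ => (z:ℝ)) h1
        rw [h2]; ring
      rw [hcast]
      have hle : 1 / x ≤ (⌊1/x⌋ : ℝ) + t := by linarith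
      have := one_div_le_one_div_of_le hinvpos hle
      rwa [one_div_one_div] at this
    · have hcast : (((⌊1/x⌋ - 1).toNat : ℕ) : ℝ) + 1 = (⌊1/x⌋ : ℝ) := by
        have h1 : ((⌊1/x⌋ - 1).toNat : ℤ) = ⌊1/x⌋ - 1 := Int.toNat_of_nonneg (by omega)
        have h2 : (((⌊1/x⌋ - 1).toNat : ℕ) : ℝ) = ((⌊1/x⌋ : ℝ) - 1) := by
          exact_mod_cast congrArg (fun z : ℤ => (z:ℝ)) h1
        rw [h2]; ring
      rw [hcast]
      have hfpos : (0:ℝ) < (⌊1/x⌋ : ℝ) := by exact_mod_cast hk1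
      have := one_div_le_one_div_of_le hfpos (Int.floor_le (1/x))
      rwa [one_div_one_div] at this
  · rintro (rfl | ⟨n, h1, h2⟩)
    · exact ⟨by rw [gaussMap, if_pos rfl]; exact ht0, le_refl 0, zero_le_one⟩
    · have hn1 : (0:ℝ) < (n:ℝ) + 1 := by positivity
      have hnt : (0:ℝ) < (n:ℝ) + 1 + t := by positivity
      have hxpos : 0 < x := lt_of_lt_of_le (by positivity) h1
      have hx1 : x ≤ 1 := h2.trans (by rw [div_le_one hn1]; linarith)
      have hlow : (n:ℝ) + 1 ≤ 1 / x := by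
        have := one_div_le_one_div_of_le hxpos h2
        rwa [one_div_one_div] at this
      have hhigh : 1 / x ≤ (n:ℝ) + 1 + t := by
        have := one_div_le_one_div_of_le (by positivity : (0:ℝ) < 1/((n:ℝ)+1+t)) h1
        rwa [one_div_one_div] at this
      have hfloor : ⌊1/x⌋ = (n:ℤ) + 1 := by
        rw [Int.floor_eq_iff]
        constructor
        · exact_mod_cast hlow
        · push_cast; linarith
      refine ⟨?_, hxpos.le, hx1⟩
      rw [gaussMap, if_neg hxpos.ne', hfloor]
      push_cast
      linarith

lemma gaussMeasure_singleton_zero : gaussMeasure {(0:ℝ)} = 0 := by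
  rw [gaussMeasure, withDensity_apply _ (measurableSet_singleton 0)]
  apply setLIntegral_measure_zero
  rw [Measure.restrict_apply (measurableSet_singleton 0)]
  exact measure_mono_null Set.inter_subset_left (by simp)

lemma log2_pos : (0:ℝ) < Real.log 2 := Real.log_pos (by norm_num)

/-- The Borel measure `μ` on `[0, 1]` with density
`x ↦ 1/((1+x)·log 2)` with respect to Lebesgue measure is a probability measure invariant
under the Gauss map `T(x) = 1/x − ⌊1/x⌋` (`T(0) = 0`): `μ([0,1]) = 1` and the
pushforward of `μ` under `T` equals `μ`. -/
theorem stmt_14 :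
    gaussMeasure (Set.Icc (0 : ℝ) 1) = 1 ∧
    Measure.map gaussMap gaussMeasure = gaussMeasure := by
  have hIcc01 : gaussMeasure (Set.Icc (0 : ℝ) 1) = 1 := by
    rw [gaussMeasure_Icc le_rfl zero_le_one le_rfl]
    norm_num [Real.log_one, div_self log2_pos.ne']
  refine ⟨hIcc01, ?_⟩
  haveI : IsProbabilityMeasure gaussMeasure := ⟨by
    rw [gaussMeasure_inter Set.univ MeasurableSet.univ, Set.univ_inter]; exact hIcc01⟩
  haveI := Measure.isProbabilityMeasure_map (μ := gaussMeasure) measurable_gaussMap.aemeasurable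
  refine Measure.ext_of_Iic _ _ (fun t => ?_)
  rw [Measure.map_apply measurable_gaussMap measurableSet_Iic,
    gaussMeasure_inter _ (measurable_gaussMap measurableSet_Iic),
    gaussMeasure_inter _ measurableSet_Iic]
  rcases lt_or_ge t 0 with htn | ht0
  · have e1 : gaussMap ⁻¹' Set.Iic t ∩ Set.Icc 0 1 = ∅ := by
      apply Set.eq_empty_iff_forall_notMem.2
      rintro x ⟨h1, _⟩
      have h2 : gaussMap x ≤ t := h1
      have := gaussMap_nonneg x
      linarith
    have e2 : Set.Iic t ∩ Set.Icc 0 1 = ∅ :=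
      Set.eq_empty_iff_forall_notMem.2 fun x hx =>
        absurd (hx.2.1) (not_le.2 (lt_of_le_of_lt hx.1 htn))
    rw [e1, e2]
  rcases lt_or_ge t 1 with ht1 | ht1
  · -- main case
    rw [preimage_Iic ht0 ht1]
    have hIic : Set.Iic t ∩ Set.Icc 0 1 = Set.Icc 0 t :=
      Set.ext fun x => ⟨fun h => ⟨h.2.1, h.1⟩, fun h => ⟨h.2, h.1, h.2.trans ht1.le⟩⟩
    rw [hIic, gaussMeasure_Icc le_rfl ht0 ht1.le]
    set S := ⋃ n : ℕ, Set.Icc (1/((n:ℝ)+1+t)) (1/((n:ℝ)+1)) with hS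
    have hins : gaussMeasure (insert (0:ℝ) S) = gaussMeasure S := by
      apply le_antisymm
      · calc gaussMeasure (insert (0:ℝ) S) = gaussMeasure ({0} ∪ S) := by rw [Set.insert_eq]
          _ ≤ gaussMeasure {0} + gaussMeasure S := measure_union_le _ _
          _ = gaussMeasure S := by rw [gaussMeasure_singleton_zero, zero_add]
      · exact measure_mono (Set.subset_insert _ _)
    rw [hins]
    have key : ∀ m n : ℕ, m < n →
        Disjoint (Set.Icc (1/((m:ℝ)+1+t)) (1/((m:ℝ)+1)))
          (Set.Icc (1/((n:ℝ)+1+t)) (1/((n:ℝ)+1))) := by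
      intro m n h
      rw [Set.disjoint_left]
      rintro x ⟨hx1, _⟩ ⟨_, hx4⟩
      have hmn : ((m:ℝ)+1+t) < (n:ℝ)+1 := by
        have : (m:ℝ) + 1 ≤ (n:ℝ) := by exact_mod_cast h
        linarith
      have := one_div_lt_one_div_of_lt (by positivity) hmn
      linarith
    have hdisj : Pairwise (Function.onFun Disjoint
        fun n : ℕ => Set.Icc (1/((n:ℝ)+1+t)) (1/((n:ℝ)+1))) := by
      intro m n hmn
      rcases hmn.lt_or_gt with h | h
      · exact key m n h
      · exact (key n m h).symm
    rw [hS, measure_iUnion hdisj (fun n => measurableSet_Icc)]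
    have hterm : ∀ n : ℕ, gaussMeasure (Set.Icc (1/((n:ℝ)+1+t)) (1/((n:ℝ)+1)))
        = ENNReal.ofReal
          ((Real.log (1 + 1/((n:ℝ)+1)) - Real.log (1 + 1/((n:ℝ)+1+t))) / Real.log 2) := by
      intro n
      rw [gaussMeasure_Icc (by positivity)
        (one_div_le_one_div_of_le (by positivity : (0:ℝ) < (n:ℝ)+1)
          (by linarith : ((n:ℝ)+1) ≤ (n:ℝ)+1+t))
        (by rw [div_le_one (by positivity)]; have : (0:ℝ) ≤ (n:ℝ) := n.cast_nonneg; linarith)]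
    simp only [hterm]
    have hs := (telescope_hasSum ht0).div_const (Real.log 2)
    have hnn : ∀ n : ℕ,
        0 ≤ (Real.log (1 + 1/((n:ℝ)+1)) - Real.log (1 + 1/((n:ℝ)+1+t))) / Real.log 2 := by
      intro n
      apply div_nonneg _ log2_pos.le
      apply sub_nonneg.2
      apply Real.log_le_log (by positivity)
      have := one_div_le_one_div_of_le (by positivity : (0:ℝ) < (n:ℝ)+1)
        (by linarith : ((n:ℝ)+1) ≤ (n:ℝ)+1+t)
      linarith
    rw [← ENNReal.ofReal_tsum_of_nonneg hnn hs.summable, hs.tsum_eq]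
    norm_num [Real.log_one]
  · have e1 : gaussMap ⁻¹' Set.Iic t ∩ Set.Icc 0 1 = Set.Icc 0 1 :=
      Set.inter_eq_right.2 fun x _ => (gaussMap_lt_one x).le.trans ht1
    have e2 : Set.Iic t ∩ Set.Icc 0 1 = Set.Icc 0 1 :=
      Set.inter_eq_right.2 fun x hx => hx.2.trans ht1
    rw [e1, e2]
end

section
/- Define T̂ on [0, 1]² (for x irrational) by T̂(x, u) := (1/x − ⌊1/x⌋, 1/(⌊1/x⌋ + u)). Then T̂ preserves the Borel measure on [0, 1]² with density (x, u) ↦ 1/(1+xu)² with respect to two-dimensional Lebesgue measure: the pushforward of this measure under T̂ equals itself. -/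
open MeasureTheory

open Set ENNReal

/-- The natural extension `T̂(x, u) = (1/x − ⌊1/x⌋, 1/(⌊1/x⌋ + u))` of the Gauss map
(defined arbitrarily, here by the same junk-value formula, at `x = 0`). -/
noncomputable def gaussNatExt : ℝ × ℝ → ℝ × ℝ := fun p =>
  (1 / p.1 - (⌊1 / p.1⌋ : ℝ), 1 / ((⌊1 / p.1⌋ : ℝ) + p.2))

namespace GaussAux

noncomputable def ρ : ℝ × ℝ → ℝ≥0∞ := fun p => ENNReal.ofReal (1 / (1 + p.1 * p.2) ^ 2)

def A (n : ℕ) : Set ℝ := Ioo (1 / (n + 2) : ℝ) (1 / (n + 1))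
def S (n : ℕ) : Set (ℝ × ℝ) := A n ×ˢ Ioo (0 : ℝ) 1
def T (n : ℕ) : Set (ℝ × ℝ) := Ioo (0 : ℝ) 1 ×ˢ A n

lemma mem_A_iff {n : ℕ} {x : ℝ} : x ∈ A n ↔ 0 < x ∧ (n + 1 : ℝ) < 1 / x ∧ 1 / x < n + 2 := by
  have hn1 : (0:ℝ) < (n:ℝ) + 1 := by positivity
  have hn2 : (0:ℝ) < (n:ℝ) + 2 := by positivity
  constructor
  · rintro ⟨h1, h2⟩
    have hx : 0 < x := lt_trans (by positivity) h1
    rw [div_lt_iff₀ hn2] at h1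
    rw [lt_div_iff₀ hn1] at h2
    exact ⟨hx, by rw [lt_div_iff₀ hx]; nlinarith, by rw [div_lt_iff₀ hx]; nlinarith⟩
  · rintro ⟨hx, h1, h2⟩
    rw [lt_div_iff₀ hx] at h1
    rw [div_lt_iff₀ hx] at h2
    exact ⟨by rw [div_lt_iff₀ hn2]; nlinarith, by rw [lt_div_iff₀ hn1]; nlinarith⟩

lemma floor_eq {n : ℕ} {x : ℝ} (hx : x ∈ A n) : ⌊1 / x⌋ = (n : ℤ) + 1 := by
  obtain ⟨hx0, h1, h2⟩ := mem_A_iff.mp hx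
  rw [Int.floor_eq_iff]
  push_cast
  exact ⟨le_of_lt h1, by linarith⟩

lemma f_eq {n : ℕ} {p : ℝ × ℝ} (hp : p ∈ S n) :
    gaussNatExt p = (1 / p.1 - ((n : ℝ) + 1), 1 / (((n : ℝ) + 1) + p.2)) := by
  have h := floor_eq (n := n) hp.1
  simp only [gaussNatExt, h]
  push_cast
  ring_nf

/-- the model map on the strip -/
noncomputable def g (n : ℕ) : ℝ × ℝ → ℝ × ℝ := fun p =>
  (1 / p.1 - ((n : ℝ) + 1), 1 / (((n : ℝ) + 1) + p.2))

noncomputable def D (n : ℕ) (p : ℝ × ℝ) : ℝ × ℝ →L[ℝ] ℝ × ℝ :=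
  ((-(p.1 ^ 2)⁻¹) • (1 : ℝ →L[ℝ] ℝ)).prodMap ((-((((n : ℝ) + 1) + p.2) ^ 2)⁻¹) • (1 : ℝ →L[ℝ] ℝ))

lemma det_prodMapR (f₁ f₂ : ℝ →ₗ[ℝ] ℝ) : (f₁.prodMap f₂).det = f₁.det * f₂.det := by
  let b : Module.Basis Unit ℝ ℝ := Module.Basis.singleton Unit ℝ
  rw [← LinearMap.det_toMatrix (b.prod b), ← LinearMap.det_toMatrix b f₁,
    ← LinearMap.det_toMatrix b f₂, LinearMap.toMatrix_prodMap b b f₁ f₂,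
    Matrix.det_fromBlocks_zero₂₁]

lemma det_D (n : ℕ) (p : ℝ × ℝ) :
    (D n p).det = (p.1 ^ 2)⁻¹ * ((((n : ℝ) + 1) + p.2) ^ 2)⁻¹ := by
  have e : ∀ c : ℝ, ((c • (1 : ℝ →L[ℝ] ℝ) : ℝ →L[ℝ] ℝ) : ℝ →ₗ[ℝ] ℝ).det = c := by
    intro c
    rw [ContinuousLinearMap.coe_smul, ContinuousLinearMap.one_def,
      ContinuousLinearMap.coe_id, LinearMap.det_smul]
    simp
  rw [D, ContinuousLinearMap.det, ContinuousLinearMap.coe_prodMap, det_prodMapR, e, e]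
  ring

lemma hasFDerivAt_g {n : ℕ} {p : ℝ × ℝ} (hx : p.1 ≠ 0) (hu : ((n : ℝ) + 1) + p.2 ≠ 0) :
    HasFDerivAt (g n) (D n p) p := by
  have h1 : HasDerivAt (fun x : ℝ => 1 / x - ((n : ℝ) + 1)) (-(p.1 ^ 2)⁻¹) p.1 := by
    simpa [one_div] using ((hasDerivAt_inv hx).sub_const ((n : ℝ) + 1))
  have h2 : HasDerivAt (fun u : ℝ => 1 / (((n : ℝ) + 1) + u)) (-((((n : ℝ) + 1) + p.2) ^ 2)⁻¹) p.2 := by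
    have hb : HasDerivAt (fun u : ℝ => ((n : ℝ) + 1) + u) 1 p.2 := (hasDerivAt_id p.2).const_add _
    simpa [one_div, Function.comp_def] using (hasDerivAt_inv hu).comp p.2 hb
  have H1 := (h1.hasFDerivAt.comp p hasFDerivAt_fst)
  have H2 := (h2.hasFDerivAt.comp p hasFDerivAt_snd)
  have H := H1.prodMk H2
  refine (show HasFDerivAt (g n) _ p from H).congr_fderiv ?_
  ext <;> simp [D, ContinuousLinearMap.smulRight_apply, mul_comm]

lemma hasFDerivWithinAt {n : ℕ} {p : ℝ × ℝ} (hp : p ∈ S n) :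
    HasFDerivWithinAt gaussNatExt (D n p) (S n) p := by
  obtain ⟨hx0, -, -⟩ := mem_A_iff.mp hp.1
  have hu : ((n : ℝ) + 1) + p.2 ≠ 0 := by have := hp.2.1; positivity
  exact ((hasFDerivAt_g (ne_of_gt hx0) hu).hasFDerivWithinAt).congr
    (fun q hq => (f_eq hq)) (f_eq hp)


lemma measurable_f : Measurable gaussNatExt := by
  have h1 : Measurable fun p : ℝ × ℝ => 1 / p.1 := measurable_fst.inv.const_mul 1
  have h2 : Measurable fun p : ℝ × ℝ => (⌊1 / p.1⌋ : ℝ) :=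
    measurable_from_top.comp (Int.measurable_floor.comp h1)
  exact (h1.sub h2).prod ((h2.add measurable_snd).const_div 1)

lemma measurable_ρ : Measurable ρ :=
  Measurable.ennreal_ofReal
    (((measurable_const.add (measurable_fst.mul measurable_snd)).pow_const 2).const_div 1)

lemma injOn (n : ℕ) : InjOn gaussNatExt (S n) := by
  intro p hp q hq h
  rw [f_eq hp, f_eq hq] at h
  have h1 := congrArg Prod.fst h
  have h2 := congrArg Prod.snd h
  simp only at h1 h2
  have hp1 : p.1 ≠ 0 := ne_of_gt (mem_A_iff.mp hp.1).1
  have hq1 : q.1 ≠ 0 := ne_of_gt (mem_A_iff.mp hq.1).1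
  have hpu : ((n : ℝ) + 1) + p.2 ≠ 0 := by have := hp.2.1; positivity
  have hqu : ((n : ℝ) + 1) + q.2 ≠ 0 := by have := hq.2.1; positivity
  have e1 : p.1⁻¹ = q.1⁻¹ := by
    have : 1 / p.1 = 1 / q.1 := by linarith
    rwa [one_div, one_div] at this
  have e2 : (((n : ℝ) + 1) + p.2)⁻¹ = (((n : ℝ) + 1) + q.2)⁻¹ := by
    rw [← one_div, ← one_div]; exact h2
  have i1 := inv_injective e1
  have i2 := inv_injective e2
  exact Prod.ext i1 (by linarith)

lemma image (n : ℕ) : gaussNatExt '' S n = T n := by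
  ext q
  constructor
  · rintro ⟨p, hp, rfl⟩
    rw [f_eq hp]
    obtain ⟨hx0, hb1, hb2⟩ := mem_A_iff.mp hp.1
    obtain ⟨hu0, hu1⟩ := hp.2
    have hc : (0:ℝ) < ((n : ℝ) + 1) + p.2 := by positivity
    refine ⟨⟨by linarith, by linarith⟩, ?_⟩
    rw [mem_A_iff]
    refine ⟨by positivity, ?_, ?_⟩
    · rw [one_div_one_div]; linarith
    · rw [one_div_one_div]; linarith
  · rintro ⟨hy, hv⟩
    obtain ⟨hv0, hv1, hv2⟩ := mem_A_iff.mp hv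
    obtain ⟨hy0, hy1⟩ := hy
    set c : ℝ := (n : ℝ) + 1 with hc
    have hyc : (0:ℝ) < q.1 + c := by positivity
    have hxA : 1 / (q.1 + c) ∈ A n := by
      rw [mem_A_iff]
      refine ⟨by positivity, ?_, ?_⟩ <;> rw [one_div_one_div] <;> linarith
    have huI : 1 / q.2 - c ∈ Ioo (0:ℝ) 1 := ⟨by simp only [hc]; linarith, by simp only [hc]; linarith⟩
    refine ⟨(1 / (q.1 + c), 1 / q.2 - c), ⟨hxA, huI⟩, ?_⟩
    rw [f_eq ⟨hxA, huI⟩]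
    have hv0' : q.2 ≠ 0 := ne_of_gt hv0
    ext <;> simp only
    · rw [one_div_one_div]; ring
    · rw [show c + (1 / q.2 - c) = 1 / q.2 by ring, one_div_one_div]

lemma density_eq {n : ℕ} {p : ℝ × ℝ} (hp : p ∈ S n) :
    ρ p = ENNReal.ofReal |(D n p).det| * ρ (gaussNatExt p) := by
  rw [f_eq hp, det_D, ρ, ρ]
  obtain ⟨hx0, hb1, hb2⟩ := mem_A_iff.mp hp.1
  obtain ⟨hu0, hu1⟩ := hp.2
  have hc : (0:ℝ) < ((n : ℝ) + 1) + p.2 := by positivity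
  rw [← ENNReal.ofReal_mul (by positivity)]
  congr 1
  rw [abs_of_pos (by positivity)]
  have h1 : (1:ℝ) + p.1 * p.2 > 0 := by positivity
  have hx' : p.1 ≠ 0 := ne_of_gt hx0
  have hc' : ((n : ℝ) + 1) + p.2 ≠ 0 := ne_of_gt hc
  have h1' : (1:ℝ) + p.1 * p.2 ≠ 0 := ne_of_gt h1
  have key : 1 + (1 / p.1 - ((n:ℝ) + 1)) * (1 / (((n:ℝ) + 1) + p.2))
      = (1 + p.1 * p.2) / (p.1 * (((n:ℝ) + 1) + p.2)) := by
    field_simp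
    ring
  rw [key]
  rw [div_pow, one_div ((1 + p.1 * p.2) ^ 2 / (p.1 * (↑n + 1 + p.2)) ^ 2), inv_div]
  field_simp

lemma meas_S (n : ℕ) : MeasurableSet (S n) := measurableSet_Ioo.prod measurableSet_Ioo
lemma meas_T (n : ℕ) : MeasurableSet (T n) := measurableSet_Ioo.prod measurableSet_Ioo

lemma measurable_det (n : ℕ) : Measurable fun p : ℝ × ℝ => ENNReal.ofReal |(D n p).det| := by
  simp_rw [det_D]
  exact Measurable.ennreal_ofReal (Measurable.abs
    ((measurable_fst.pow_const 2).inv.mul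
      (((measurable_const.add measurable_snd).pow_const 2).inv)))

lemma map_withDensity_comp {α β : Type*} [MeasurableSpace α] [MeasurableSpace β]
    (μ : Measure α) {f : α → β} (hf : Measurable f) {g : β → ℝ≥0∞} (hg : Measurable g) :
    Measure.map f (μ.withDensity (fun a => g (f a))) = (Measure.map f μ).withDensity g := by
  ext s hs
  rw [Measure.map_apply hf hs, withDensity_apply _ (hf hs), withDensity_apply _ hs,
    setLIntegral_map hs hg hf]

lemma strip (n : ℕ) :
    Measure.map gaussNatExt ((volume.restrict (S n)).withDensity ρ)
      = (volume.restrict (T n)).withDensity ρ := by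
  have hSm := meas_S n
  have h1 : (volume.restrict (S n)).withDensity ρ
      = (volume.restrict (S n)).withDensity
          ((fun p => ENNReal.ofReal |(D n p).det|) * fun p => ρ (gaussNatExt p)) := by
    apply withDensity_congr_ae
    filter_upwards [ae_restrict_mem hSm] with p hp
    exact density_eq hp
  rw [h1, withDensity_mul _ (measurable_det n)
      (show Measurable fun p => ρ (gaussNatExt p) from measurable_ρ.comp measurable_f),
    map_withDensity_comp _ measurable_f measurable_ρ,
    map_withDensity_abs_det_fderiv_eq_addHaar volume hSm.nullMeasurableSet
      (fun p hp => hasFDerivWithinAt hp) (injOn n),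
    image]

lemma pairwise_A : Pairwise (Function.onFun Disjoint A) := by
  intro m k hmk
  rw [Function.onFun, Set.disjoint_left]
  intro x hxm hxk
  obtain ⟨hx0, hm1, hm2⟩ := mem_A_iff.mp hxm
  obtain ⟨-, hk1, hk2⟩ := mem_A_iff.mp hxk
  apply hmk
  have h1 : (m : ℝ) < (k : ℝ) + 1 := by linarith
  have h2 : (k : ℝ) < (m : ℝ) + 1 := by linarith
  have h1' : m < k + 1 := by exact_mod_cast h1
  have h2' : k < m + 1 := by exact_mod_cast h2
  omega

lemma pairwise_S : Pairwise (Function.onFun Disjoint S) := fun _ _ hmk =>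
  Set.disjoint_left.mpr fun _ hp hp' =>
    Set.disjoint_left.mp (pairwise_A hmk) hp.1 hp'.1

lemma pairwise_T : Pairwise (Function.onFun Disjoint T) := fun _ _ hmk =>
  Set.disjoint_left.mpr fun _ hp hp' =>
    Set.disjoint_left.mp (pairwise_A hmk) hp.2 hp'.2

/-- exceptional countable set -/
def C : Set ℝ := {0} ∪ Set.range (fun k : ℕ => 1 / ((k : ℝ) + 1))

lemma countable_C : C.Countable := (Set.countable_singleton 0).union (Set.countable_range _)

lemma cover {x : ℝ} (hx : x ∈ Icc (0:ℝ) 1) (hxC : x ∉ C) : x ∈ ⋃ n, A n := by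
  obtain ⟨hx0, hx1⟩ := hx
  have hx0' : 0 < x := lt_of_le_of_ne hx0 (by rintro rfl; exact hxC (Or.inl rfl))
  have hy1 : (1:ℝ) ≤ 1 / x := by rw [le_div_iff₀ hx0']; linarith
  set m : ℤ := ⌊1 / x⌋ with hm
  have hm1 : 1 ≤ m := by
    rw [hm]; exact Int.le_floor.mpr (by exact_mod_cast hy1)
  have hmle : (m : ℝ) ≤ 1 / x := Int.floor_le _
  have hmlt : 1 / x < (m : ℝ) + 1 := Int.lt_floor_add_one _
  have hcast : (((m - 1).toNat : ℕ) : ℝ) = (m : ℝ) - 1 := by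
    have : (((m - 1).toNat : ℤ) : ℝ) = (m : ℝ) - 1 := by
      rw [Int.toNat_of_nonneg (by omega)]; push_cast; ring
    exact_mod_cast this
  by_cases he : (m : ℝ) = 1 / x
  · exfalso
    apply hxC
    right
    refine ⟨(m - 1).toNat, ?_⟩
    show 1 / (((m - 1).toNat : ℝ) + 1) = x
    rw [hcast, show (m : ℝ) - 1 + 1 = (m : ℝ) by ring, he, one_div_one_div]
  · rw [Set.mem_iUnion]
    refine ⟨(m - 1).toNat, mem_A_iff.mpr ⟨hx0', ?_, ?_⟩⟩
    · rw [hcast, show (m : ℝ) - 1 + 1 = (m : ℝ) by ring]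
      exact lt_of_le_of_ne hmle he
    · rw [hcast, show (m : ℝ) - 1 + 2 = (m : ℝ) + 1 by ring]
      exact hmlt

lemma A_subset (n : ℕ) : A n ⊆ Icc (0:ℝ) 1 := by
  intro x hx
  obtain ⟨hx0, h1, h2⟩ := mem_A_iff.mp hx
  have hn1 : (0:ℝ) < (n:ℝ) + 1 := by positivity
  refine ⟨le_of_lt hx0, ?_⟩
  rw [lt_div_iff₀ hx0] at h1
  nlinarith

def Q : Set (ℝ × ℝ) := Icc (0:ℝ) 1 ×ˢ Icc (0:ℝ) 1

lemma null_prod_left (E : Set ℝ) (hE : E.Countable) : volume (E ×ˢ (univ : Set ℝ)) = 0 := by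
  rw [Measure.volume_eq_prod, Measure.prod_prod, hE.measure_zero, zero_mul]

lemma null_prod_right (E : Set ℝ) (hE : E.Countable) : volume ((univ : Set ℝ) ×ˢ E) = 0 := by
  rw [Measure.volume_eq_prod, Measure.prod_prod, hE.measure_zero, mul_zero]

lemma Q_ae_S : Q =ᵐ[volume] ⋃ n, S n := by
  have hsub : (⋃ n, S n) ⊆ Q := by
    rintro p hp
    rw [Set.mem_iUnion] at hp
    obtain ⟨n, hA, hI⟩ := hp
    exact ⟨A_subset n hA, Ioo_subset_Icc_self hI⟩
  have hnull : volume (Q \ ⋃ n, S n) = 0 := by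
    refine measure_mono_null ?_
      (measure_union_null (null_prod_left C countable_C)
        (null_prod_right ({0, 1} : Set ℝ) ((Set.finite_singleton _).insert _).countable))
    rintro ⟨x, u⟩ ⟨⟨hx, hu⟩, hns⟩
    by_cases hu' : u ∈ Ioo (0:ℝ) 1
    · left
      refine ⟨?_, trivial⟩
      by_contra hxC
      exact hns (Set.mem_iUnion.mp (cover hx hxC) |> fun ⟨n, hA⟩ =>
        Set.mem_iUnion.mpr ⟨n, hA, hu'⟩)
    · right
      refine ⟨trivial, ?_⟩
      obtain ⟨h0, h1⟩ := hu
      rcases eq_or_lt_of_le h0 with h | h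
      · exact Or.inl h.symm
      · exact Or.inr (by
          rcases eq_or_lt_of_le h1 with h' | h'
          · exact h'
          · exact absurd ⟨h, h'⟩ hu')
  have hnull2 : volume ((⋃ n, S n) \ Q) = 0 := by
    rw [Set.diff_eq_empty.mpr hsub, measure_empty]
  exact MeasureTheory.ae_eq_set.mpr ⟨hnull, hnull2⟩

lemma Q_ae_T : Q =ᵐ[volume] ⋃ n, T n := by
  have hsub : (⋃ n, T n) ⊆ Q := by
    rintro p hp
    rw [Set.mem_iUnion] at hp
    obtain ⟨n, hI, hA⟩ := hp
    exact ⟨Ioo_subset_Icc_self hI, A_subset n hA⟩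
  have hnull : volume (Q \ ⋃ n, T n) = 0 := by
    refine measure_mono_null ?_
      (measure_union_null (null_prod_left ({0, 1} : Set ℝ) ((Set.finite_singleton _).insert _).countable)
        (null_prod_right C countable_C))
    rintro ⟨x, u⟩ ⟨⟨hx, hu⟩, hns⟩
    by_cases hx' : x ∈ Ioo (0:ℝ) 1
    · right
      refine ⟨trivial, ?_⟩
      by_contra huC
      exact hns (Set.mem_iUnion.mp (cover hu huC) |> fun ⟨n, hA⟩ =>
        Set.mem_iUnion.mpr ⟨n, hx', hA⟩)
    · left
      refine ⟨?_, trivial⟩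
      obtain ⟨h0, h1⟩ := hx
      rcases eq_or_lt_of_le h0 with h | h
      · exact Or.inl h.symm
      · exact Or.inr (by
          rcases eq_or_lt_of_le h1 with h' | h'
          · exact h'
          · exact absurd ⟨h, h'⟩ hx')
  have hnull2 : volume ((⋃ n, T n) \ Q) = 0 := by
    rw [Set.diff_eq_empty.mpr hsub, measure_empty]
  exact MeasureTheory.ae_eq_set.mpr ⟨hnull, hnull2⟩

end GaussAux

/-- The measure on `[0, 1]²` with density `(x, u) ↦ 1/(1+xu)²` with respect to
two-dimensional Lebesgue measure. -/
noncomputable def gaussExtMeasure : Measure (ℝ × ℝ) :=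
  (volume.restrict ((Set.Icc (0 : ℝ) 1) ×ˢ (Set.Icc (0 : ℝ) 1))).withDensity
    (fun p => ENNReal.ofReal (1 / (1 + p.1 * p.2) ^ 2))

open GaussAux in
/-- The map `T̂(x, u) = (1/x − ⌊1/x⌋, 1/(⌊1/x⌋ + u))` on `[0, 1]²`
preserves the Borel measure with density `(x, u) ↦ 1/(1+xu)²` with respect to
two-dimensional Lebesgue measure: the pushforward of this measure under `T̂` equals
itself. -/
theorem stmt_15 :
    Measure.map gaussNatExt gaussExtMeasure = gaussExtMeasure := by
  have hQ : (Set.Icc (0 : ℝ) 1) ×ˢ (Set.Icc (0 : ℝ) 1) = Q := rfl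
  have hρ : (fun p : ℝ × ℝ => ENNReal.ofReal (1 / (1 + p.1 * p.2) ^ 2)) = ρ := rfl
  have hμS : gaussExtMeasure
      = Measure.sum (fun n => (volume.restrict (S n)).withDensity ρ) := by
    rw [gaussExtMeasure, hQ, hρ, Measure.restrict_congr_set Q_ae_S,
      Measure.restrict_iUnion pairwise_S meas_S, withDensity_sum]
  have hμT : gaussExtMeasure
      = Measure.sum (fun n => (volume.restrict (T n)).withDensity ρ) := by
    rw [gaussExtMeasure, hQ, hρ, Measure.restrict_congr_set Q_ae_T,
      Measure.restrict_iUnion pairwise_T meas_T, withDensity_sum]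
  calc Measure.map gaussNatExt gaussExtMeasure
      = Measure.map gaussNatExt (Measure.sum fun n => (volume.restrict (S n)).withDensity ρ) := by
        rw [← hμS]
    _ = Measure.sum fun n => Measure.map gaussNatExt ((volume.restrict (S n)).withDensity ρ) :=
        Measure.map_sum measurable_f.aemeasurable
    _ = Measure.sum fun n => (volume.restrict (T n)).withDensity ρ := by simp_rw [strip]
    _ = gaussExtMeasure := hμT.symm
end

section
/- Let g : (0, ∞) → [0, ∞) be defined by g(x) := |log(e^x − 1)|. Then g preserves Lebesgue measure on (0, ∞): for every Borel set A ⊆ (0, ∞), the Lebesgue measure of g^{-1}(A) equals the Lebesgue measure of A. (Each y > 0 has exactly two preimages, x₁ = log(1 + e^y) and x₂ = log(1 + e^{-y}), and the sum of the reciprocals of |g'| at these preimages equals 1: e^y/(1+e^y) + e^{-y}/(1+e^{-y}) = 1.) -/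
open MeasureTheory

/-- The map `g(x) = |log(eˣ − 1)|`, conjugate of the Farey map, which preserves Lebesgue
measure on `(0, ∞)`. -/
noncomputable def logFareyMap (x : ℝ) : ℝ := |Real.log (Real.exp x - 1)|

noncomputable def phi1 (y : ℝ) : ℝ := Real.log (1 + Real.exp y)
noncomputable def phi2 (y : ℝ) : ℝ := Real.log (1 + Real.exp (-y))

lemma phi1_deriv (y : ℝ) : HasDerivAt phi1 (Real.exp y / (1 + Real.exp y)) y := by
  have h : (1 : ℝ) + Real.exp y ≠ 0 := by positivity
  exact ((Real.hasDerivAt_exp y).const_add 1).log h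

lemma phi2_deriv (y : ℝ) : HasDerivAt phi2 (-(Real.exp (-y) / (1 + Real.exp (-y)))) y := by
  have h : (1 : ℝ) + Real.exp (-y) ≠ 0 := by positivity
  have h1 : HasDerivAt (fun y : ℝ => Real.exp (-y)) (-Real.exp (-y)) y := by
    simpa [Function.comp_def] using (Real.hasDerivAt_exp (-y)).comp y (hasDerivAt_neg y)
  have := (h1.const_add 1).log h
  exact this.congr_deriv (by ring)

lemma phi1_mono : StrictMono phi1 := fun a b h =>
  Real.log_lt_log (by positivity) (by simpa using Real.exp_lt_exp.2 h)

lemma phi2_anti : StrictAnti phi2 := fun a b h =>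
  Real.log_lt_log (by positivity) (by simpa using Real.exp_lt_exp.2 (neg_lt_neg h))

lemma sum_eq_one (y : ℝ) :
    Real.exp y / (1 + Real.exp y) + Real.exp (-y) / (1 + Real.exp (-y)) = 1 := by
  have h1 : (1 : ℝ) + Real.exp y ≠ 0 := by positivity
  have h2 : (1 : ℝ) + Real.exp (-y) ≠ 0 := by positivity
  have h3 : Real.exp y * Real.exp (-y) = 1 := by rw [← Real.exp_add]; simp
  field_simp; nlinarith [h3]

lemma g_phi1 {y : ℝ} (hy : 0 < y) : logFareyMap (phi1 y) = y := by
  have h : (0:ℝ) < 1 + Real.exp y := by positivity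
  unfold logFareyMap phi1
  rw [Real.exp_log h]
  simp [Real.log_exp, abs_of_pos hy]

lemma g_phi2 {y : ℝ} (hy : 0 < y) : logFareyMap (phi2 y) = y := by
  have h : (0:ℝ) < 1 + Real.exp (-y) := by positivity
  unfold logFareyMap phi2
  rw [Real.exp_log h]
  simp [Real.log_exp, abs_of_pos hy]

lemma phi1_gt {y : ℝ} (hy : 0 < y) : Real.log 2 < phi1 y :=
  Real.log_lt_log (by norm_num) (by nlinarith [Real.one_lt_exp_iff.2 hy])

lemma phi2_lt {y : ℝ} (hy : 0 < y) : phi2 y < Real.log 2 :=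
  Real.log_lt_log (by positivity) (by nlinarith [Real.exp_lt_one_iff.2 (neg_lt_zero.2 hy)])

lemma phi1_pos {y : ℝ} (hy : 0 < y) : 0 < phi1 y :=
  lt_trans (Real.log_pos (by norm_num)) (phi1_gt hy)

lemma phi2_pos {y : ℝ} (_hy : 0 < y) : 0 < phi2 y :=
  Real.log_pos (by nlinarith [Real.exp_pos (-y)])

lemma key_set (A : Set ℝ) (hsub : A ⊆ Set.Ioi (0 : ℝ)) :
    logFareyMap ⁻¹' A ∩ Set.Ioi (0 : ℝ) = phi1 '' A ∪ phi2 '' A := by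
  ext x
  constructor
  · rintro ⟨hxA, hx⟩
    simp only [Set.mem_preimage] at hxA
    have hy : 0 < logFareyMap x := hsub hxA
    have hex : (0:ℝ) < Real.exp x - 1 := by
      have := Real.one_lt_exp_iff.2 hx
      linarith
    set L := Real.log (Real.exp x - 1) with hL
    have hLne : L ≠ 0 := by
      intro h; rw [logFareyMap, ← hL, h] at hy; simp at hy
    rcases hLne.lt_or_gt with hneg | hpos
    · right
      refine ⟨logFareyMap x, hxA, ?_⟩
      have : Real.exp (-(logFareyMap x)) = Real.exp x - 1 := by
        rw [logFareyMap, ← hL, abs_of_neg hneg, neg_neg, hL, Real.exp_log hex]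
      rw [phi2, this]
      have : (1:ℝ) + (Real.exp x - 1) = Real.exp x := by ring
      rw [this, Real.log_exp]
    · left
      refine ⟨logFareyMap x, hxA, ?_⟩
      have : Real.exp (logFareyMap x) = Real.exp x - 1 := by
        rw [logFareyMap, ← hL, abs_of_pos hpos, hL, Real.exp_log hex]
      rw [phi1, this]
      have : (1:ℝ) + (Real.exp x - 1) = Real.exp x := by ring
      rw [this, Real.log_exp]
  · rintro (⟨y, hyA, rfl⟩ | ⟨y, hyA, rfl⟩)
    · exact ⟨by simp [g_phi1 (hsub hyA), hyA], phi1_pos (hsub hyA)⟩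
    · exact ⟨by simp [g_phi2 (hsub hyA), hyA], phi2_pos (hsub hyA)⟩

/-- The map `g : (0, ∞) → [0, ∞)`, `g(x) = |log(eˣ − 1)|`, preserves
Lebesgue measure on `(0, ∞)`: for every Borel set `A ⊆ (0, ∞)`, the Lebesgue measure of
`g⁻¹(A)` (within the domain `(0, ∞)`) equals the Lebesgue measure of `A`. -/
theorem stmt_18 :
    ∀ A : Set ℝ, MeasurableSet A → A ⊆ Set.Ioi (0 : ℝ) →
      volume (logFareyMap ⁻¹' A ∩ Set.Ioi (0 : ℝ)) = volume A := by
  intro A hA hsub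
  rw [key_set A hsub]
  have hd1 : ∀ y ∈ A, HasFDerivWithinAt phi1
      ((1 : ℝ →L[ℝ] ℝ).smulRight (Real.exp y / (1 + Real.exp y))) A y :=
    fun y _ => (phi1_deriv y).hasFDerivAt.hasFDerivWithinAt
  have hd2 : ∀ y ∈ A, HasFDerivWithinAt phi2
      ((1 : ℝ →L[ℝ] ℝ).smulRight (-(Real.exp (-y) / (1 + Real.exp (-y))))) A y :=
    fun y _ => (phi2_deriv y).hasFDerivAt.hasFDerivWithinAt
  have inj1 : Set.InjOn phi1 A := phi1_mono.injective.injOn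
  have inj2 : Set.InjOn phi2 A := phi2_anti.injective.injOn
  have m2 : MeasurableSet (phi2 '' A) :=
    measurable_image_of_fderivWithin hA hd2 inj2
  have hdisj : Disjoint (phi1 '' A) (phi2 '' A) := by
    rw [Set.disjoint_left]
    rintro x ⟨y, hy, rfl⟩ ⟨z, hz, hzx⟩
    have := phi2_lt (hsub hz)
    rw [hzx] at this
    exact absurd (phi1_gt (hsub hy)) (by linarith)
  rw [measure_union hdisj m2,
    ← lintegral_abs_det_fderiv_eq_addHaar_image volume hA hd1 inj1,
    ← lintegral_abs_det_fderiv_eq_addHaar_image volume hA hd2 inj2]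
  simp only [ContinuousLinearMap.smulRight_one_eq_toSpanSingleton, ContinuousLinearMap.det_toSpanSingleton]
  rw [← lintegral_add_left (by fun_prop)]
  calc ∫⁻ y in A, (ENNReal.ofReal |Real.exp y / (1 + Real.exp y)|
        + ENNReal.ofReal |(-(Real.exp (-y) / (1 + Real.exp (-y))))|)
      = ∫⁻ _ in A, 1 := by
        apply lintegral_congr fun y => ?_
        have p1 : (0:ℝ) ≤ Real.exp y / (1 + Real.exp y) := by positivity
        have p2 : (0:ℝ) ≤ Real.exp (-y) / (1 + Real.exp (-y)) := by positivity
        rw [abs_neg, abs_of_nonneg p1, abs_of_nonneg p2, ← ENNReal.ofReal_add p1 p2,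
          sum_eq_one, ENNReal.ofReal_one]
    _ = volume A := setLIntegral_one A
end
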